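/- arXiv:1105.4212 — 4 statements merged into one kernel-verified Lean document; each statement's English description precedes it below -/
import Mathlib

section
/- For n ≥ 5: (a) the map T ↦ des_c(T) is a bijection from the set of standard composition tableaux of shape (n−2, 2) onto {{n−2}} ∪ {{i, n−1} : 1 ≤ i ≤ n−3}; (b) the map T ↦ des_c(T) is a bijection from the set of standard composition tableaux of shape (2, n−2) onto {{i} : 2 ≤ i ≤ n−3} ∪ {{i, j} : 3 ≤ j ≤ n−2, 1 ≤ i ≤ j−2}. Consequently S_{(n−2,2)} = F_{{n−2}} + Σ_{i=1}^{n−3} F_{{i,n−1}} and S_{(2,n−2)} = Σ_{i=2}^{n−3} F_{{i}} + Σ_{j=3}^{n−2} Σ_{i=1}^{j−2} F_{{i,j}}. -/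
/-- `SCTChain α U`: the filling `U` of the diagram of the composition `α`
(cells `0`-indexed, rows numbered from the top) arises from a saturated chain
in the poset `L_C` of compositions, where at each cover step either a new
part `1` is prepended or the leftmost part of a given size is increased by
`1`, and the cell created at the step reaching a composition of size `s` is
filled with `s`. -/
inductive SCTChain : List ℕ → ((ℕ × ℕ) → ℕ) → Prop
  | nil : SCTChain [] (fun _ => 0)
  | prepend {β : List ℕ} {U : (ℕ × ℕ) → ℕ} (h : SCTChain β U) :
      SCTChain (1 :: β)
        (fun c => if c = (0, 0) then β.sum + 1
          else if c.1 = 0 then 0 else U (c.1 - 1, c.2))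
  | grow {β : List ℕ} {U : (ℕ × ℕ) → ℕ} (h : SCTChain β U) (i : ℕ)
      (hi : i < β.length) (hleft : ∀ j < i, β.getD j 0 ≠ β.getD i 0) :
      SCTChain (β.set i (β.getD i 0 + 1))
        (fun c => if c = (i, β.getD i 0) then β.sum + 1 else U c)

/-- `T` is a standard composition tableau of shape `α ⊨ n`: the filling of
the diagram of `α` obtained from a saturated chain
`∅ = α^{n+1} ⋖ ⋯ ⋖ α^1 = α` in `L_C` by placing entry `i` in the cell in
which `α^i` differs from `α^{i+1}` (so the cell created at the step reaching
size `s` receives the entry `n + 1 - s`); entries are `0` off the diagram. -/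
def IsSCT (α : List ℕ) (T : (ℕ × ℕ) → ℕ) : Prop :=
  ∃ U, SCTChain α U ∧ T = fun c => if U c = 0 then 0 else α.sum + 1 - U c

/-- The descent set of a standard composition tableau: those `i` such that
the entry `i+1` lies in a cell weakly to the right of the cell containing
`i`. -/
def desC (T : (ℕ × ℕ) → ℕ) : Set ℕ :=
  {i | 0 < i ∧ ∃ p q : ℕ × ℕ, T p = i ∧ T q = i + 1 ∧ p.2 ≤ q.2}

/-- `set(α) = {α₁, α₁+α₂, …, α₁+⋯+α_{ℓ(α)-1}}`, the subset of `[n-1]`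
associated to a composition `α ⊨ n`; `com(T) = β` iff `desC T = compToSet β`. -/
def compToSet (α : List ℕ) : Set ℕ :=
  {s | ∃ i, 0 < i ∧ i < α.length ∧ s = (α.take i).sum}

/-- The quasisymmetric Schur function `S_α` is F-multiplicity free iff all
standard composition tableaux of shape `α` have pairwise distinct descent
sets. -/
def FmfSCT (α : List ℕ) : Prop :=
  ∀ T T', IsSCT α T → IsSCT α T' → desC T = desC T' → T = T'

def W (k : ℕ) : ℕ × ℕ → ℕ := fun c => if c.1 = 0 ∧ c.2 < k then c.2 + 1 else 0
def V (k : ℕ) : ℕ × ℕ → ℕ := fun c =>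
  if c = (1, 0) then 1 else if c.1 = 0 ∧ c.2 < k then c.2 + 2 else 0
def U1 (a : ℕ) : ℕ × ℕ → ℕ := fun c =>
  if c = (1, 0) then 1 else if c = (1, 1) then 2
  else if c.1 = 0 ∧ c.2 < a then c.2 + 3 else 0
def U2 (a k : ℕ) : ℕ × ℕ → ℕ := fun c =>
  if c = (1, 0) then 1 else if c = (1, 1) then k + 2
  else if c.1 = 0 ∧ c.2 < a then (if c.2 < k then c.2 + 2 else c.2 + 3) else 0
def U3' (b m : ℕ) : ℕ × ℕ → ℕ := fun c =>
  if c = (0, 0) then m + 1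
  else if c.1 = 1 ∧ c.2 < b then (if c.2 < m then c.2 + 1 else c.2 + 2) else 0
def U3 (b m q : ℕ) : ℕ × ℕ → ℕ := fun c =>
  if c = (0, 0) then m + 1 else if c = (0, 1) then q + 2
  else if c.1 = 1 ∧ c.2 < b then
    (if c.2 < m then c.2 + 1 else if c.2 < q then c.2 + 2 else c.2 + 3) else 0

lemma chain_pos {l U} (h : SCTChain l U) : ∀ x ∈ l, 0 < x := by
  induction h with
  | nil => simp
  | prepend h ih => intro x hx; rcases List.mem_cons.mp hx with rfl | hx; · omega
                    · exact ih x hx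
  | grow h i hi hleft ih =>
      intro x hx
      rcases List.mem_or_eq_of_mem_set hx with hx | rfl
      · exact ih x hx
      · omega

lemma chain_cast {l l' : List ℕ} {U U'} (h : SCTChain l U) (hl : l = l') (hU : U = U') :
    SCTChain l' U' := hl ▸ hU ▸ h

lemma soundW : ∀ k, SCTChain [k + 1] (W (k + 1)) := by
  intro k
  induction k with
  | zero =>
      exact chain_cast (SCTChain.nil.prepend) rfl (by
        funext c; rcases c with ⟨r, j⟩
        simp only [W, Prod.mk.injEq, List.sum_nil]
        split_ifs <;> omega)
  | succ k ih =>
      refine chain_cast (ih.grow 0 (by simp) (by intro j hj; omega)) (by simp) ?_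
      funext c; rcases c with ⟨r, j⟩
      simp only [W, List.getD_cons_zero, List.getD_cons_succ, List.sum_cons, List.sum_nil, Prod.mk.injEq]
      split_ifs <;> omega

lemma soundV : ∀ k, 1 ≤ k → SCTChain [k, 1] (V k) := by
  intro k hk
  induction k with
  | zero => omega
  | succ k ih =>
      rcases Nat.eq_or_lt_of_le hk with h1 | h1
      · -- k = 0 : [1,1] from prepend of [1]
        obtain rfl : k = 0 := by omega
        refine chain_cast ((soundW 0).prepend) (by norm_num) ?_
        funext c; rcases c with ⟨r, j⟩
        simp only [W, V, List.sum_cons, List.sum_nil, Prod.mk.injEq]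
        split_ifs <;> omega
      · have hk1 : 1 ≤ k := by omega
        refine chain_cast ((ih hk1).grow 0 (by simp) (by intro j hj; omega)) (by simp) ?_
        funext c; rcases c with ⟨r, j⟩
        simp only [V, List.getD_cons_zero, List.getD_cons_succ, List.sum_cons, List.sum_nil, Prod.mk.injEq]
        split_ifs <;> omega

lemma soundU1 : ∀ a, 1 ≤ a → SCTChain [a, 2] (U1 a) := by
  intro a ha
  induction a with
  | zero => omega
  | succ a ih =>
      rcases Nat.eq_or_lt_of_le ha with h1 | h1
      · obtain rfl : a = 0 := by omega
        refine chain_cast ((soundW 1).prepend) (by norm_num) ?_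
        funext c
        simp only [W, U1, List.sum_cons, List.sum_nil, Prod.ext_iff]
        split_ifs <;> omega
      · have ha1 : 1 ≤ a := by omega
        refine chain_cast ((ih ha1).grow 0 (by simp) (by intro j hj; omega)) (by simp) ?_
        funext c
        simp only [U1, List.getD_cons_zero, List.sum_cons, List.sum_nil, Prod.ext_iff]
        split_ifs <;> omega

lemma soundU2base : ∀ k, 2 ≤ k → SCTChain [k, 2] (U2 k k) := by
  intro k hk
  have h1 := (soundV k (by omega)).grow 1 (by simp)
    (by intro j hj; interval_cases j; simp; omega)
  refine chain_cast h1 (by simp) ?_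
  funext c
  simp only [V, U2, List.getD_cons_zero, List.getD_cons_succ, List.sum_cons, List.sum_nil,
    Prod.ext_iff]
  split_ifs <;> omega

lemma soundU2 : ∀ a k, 2 ≤ k → k ≤ a → SCTChain [a, 2] (U2 a k) := by
  intro a k hk hka
  induction a, hka using Nat.le_induction with
  | base => exact soundU2base k hk
  | succ a hka ih =>
      refine chain_cast (ih.grow 0 (by simp) (by intro j hj; omega)) (by simp) ?_
      funext c
      simp only [U2, List.getD_cons_zero, List.sum_cons, List.sum_nil, Prod.ext_iff]
      split_ifs <;> omega

lemma soundU3' : ∀ b m, 2 ≤ m → m ≤ b → SCTChain [1, b] (U3' b m) := by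
  intro b m hm hmb
  induction b, hmb using Nat.le_induction with
  | base =>
      obtain ⟨m', rfl⟩ : ∃ m', m = m' + 1 := ⟨m - 1, by omega⟩
      refine chain_cast ((soundW m').prepend) rfl ?_
      funext c
      simp only [W, U3', List.sum_cons, List.sum_nil, Prod.ext_iff]
      split_ifs <;> omega
  | succ b hmb ih =>
      refine chain_cast (ih.grow 1 (by simp)
        (by intro j hj; interval_cases j; simp; omega)) (by simp) ?_
      funext c
      simp only [U3', List.getD_cons_zero, List.getD_cons_succ, List.sum_cons, List.sum_nil,
        Prod.ext_iff]
      split_ifs <;> omega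

lemma soundU3 : ∀ b m q, 2 ≤ m → m ≤ q → 3 ≤ q → q ≤ b → SCTChain [2, b] (U3 b m q) := by
  intro b m q hm hmq hq hqb
  induction b, hqb using Nat.le_induction with
  | base =>
      refine chain_cast ((soundU3' q m hm hmq).grow 0 (by simp) (by intro j hj; omega))
        (by simp) ?_
      funext c
      simp only [U3', U3, List.getD_cons_zero, List.sum_cons, List.sum_nil, Prod.ext_iff]
      split_ifs <;> omega
  | succ b hqb ih =>
      refine chain_cast (ih.grow 1 (by simp)
        (by intro j hj; interval_cases j; simp; omega)) (by simp) ?_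
      funext c
      simp only [U3, List.getD_cons_zero, List.getD_cons_succ, List.sum_cons, List.sum_nil,
        Prod.ext_iff]
      split_ifs <;> omega


lemma chain_inv {l : List ℕ} {U} (h : SCTChain l U) :
    (l = [] ∧ U = fun _ => 0) ∨
    (∃ β U', SCTChain β U' ∧ l = 1 :: β ∧
      U = fun c => if c = (0, 0) then β.sum + 1
        else if c.1 = 0 then 0 else U' (c.1 - 1, c.2)) ∨
    (∃ β U' i, SCTChain β U' ∧ i < β.length ∧ (∀ j < i, β.getD j 0 ≠ β.getD i 0) ∧
      l = β.set i (β.getD i 0 + 1) ∧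
      U = fun c => if c = (i, β.getD i 0) then β.sum + 1 else U' c) := by
  cases h with
  | nil => exact Or.inl ⟨rfl, rfl⟩
  | prepend h' => exact Or.inr (Or.inl ⟨_, _, h', rfl, rfl⟩)
  | grow h' i hi hleft => exact Or.inr (Or.inr ⟨_, _, i, h', hi, hleft, rfl, rfl⟩)

lemma classNil {U} (h : SCTChain [] U) : U = fun _ => 0 := by
  rcases chain_inv h with ⟨-, rfl⟩ | ⟨β, U', h', hl, hU⟩ | ⟨β, U', i, h', hi, hleft, hl, hU⟩
  · rfl
  · exact absurd hl (by simp)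
  · have := congrArg List.length hl
    simp [List.length_set] at this
    omega

lemma two_of_len {β : List ℕ} {l : List ℕ} (hl : l = β.set i (β.getD i 0 + 1))
    (h2 : l.length = 2) : ∃ x y, β = [x, y] := by
  have := congrArg List.length hl
  simp only [List.length_set, h2] at this
  exact List.length_eq_two.mp this.symm

lemma classW : ∀ k U, SCTChain [k] U → 1 ≤ k ∧ U = W k := by
  intro k
  induction k using Nat.strong_induction_on with
  | _ k IH =>
    intro U h
    rcases chain_inv h with ⟨h1, -⟩ | ⟨β, U', h', hl, hU⟩ | ⟨β, U', i, h', hi, hleft, hl, hU⟩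
    · exact absurd h1 (by simp)
    · injection hl with h1 h2
      subst h1; subst h2
      rw [classNil h'] at hU
      refine ⟨le_refl 1, ?_⟩
      rw [hU]; funext c
      simp only [W, List.sum_nil, Prod.ext_iff]
      split_ifs <;> omega
    · have hlen : β.length = 1 := by
        have := congrArg List.length hl
        simpa [List.length_set] using this.symm
      obtain ⟨x, rfl⟩ := List.length_eq_one_iff.mp hlen
      obtain rfl : i = 0 := by simpa using hi
      simp only [List.getD_cons_zero, List.set] at hl hU
      injection hl with h1 h2
      subst h1
      obtain ⟨hx, rfl⟩ := IH x (by omega) U' h'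
      refine ⟨by omega, ?_⟩
      rw [hU]; funext c
      simp only [W, List.sum_cons, List.sum_nil, Prod.ext_iff]
      split_ifs <;> omega

lemma classV : ∀ k U, SCTChain [k, 1] U → 1 ≤ k ∧ U = V k := by
  intro k
  induction k using Nat.strong_induction_on with
  | _ k IH =>
    intro U h
    rcases chain_inv h with ⟨h1, -⟩ | ⟨β, U', h', hl, hU⟩ | ⟨β, U', i, h', hi, hleft, hl, hU⟩
    · exact absurd h1 (by simp)
    · injection hl with h1 h2
      subst h1; subst h2
      obtain ⟨-, rfl⟩ := classW 1 U' h'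
      refine ⟨le_refl 1, ?_⟩
      rw [hU]; funext c
      simp only [W, V, List.sum_cons, List.sum_nil, Prod.ext_iff]
      split_ifs <;> omega
    · obtain ⟨x, y, rfl⟩ := two_of_len hl (by simp)
      have hi2 : i < 2 := by simpa using hi
      interval_cases i
      · simp only [List.getD_cons_zero, List.set] at hl hU
        injection hl with h1 h2
        injection h2 with h2 h3
        subst h1; subst h2
        obtain ⟨hx, rfl⟩ := IH x (by omega) U' h'
        refine ⟨by omega, ?_⟩
        rw [hU]; funext c
        simp only [V, List.sum_cons, List.sum_nil, Prod.ext_iff]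
        split_ifs <;> omega
      · simp only [List.getD_cons_zero, List.getD_cons_succ, List.set] at hl hU
        injection hl with h1 h2
        injection h2 with h2 h3
        obtain rfl : y = 0 := by omega
        exact absurd (chain_pos h' 0 (by simp)) (by omega)

lemma classA : ∀ a U, SCTChain [a, 2] U →
    1 ≤ a ∧ (U = U1 a ∨ ∃ k, 2 ≤ k ∧ k ≤ a ∧ U = U2 a k) := by
  intro a
  induction a using Nat.strong_induction_on with
  | _ a IH =>
    intro U h
    rcases chain_inv h with ⟨h1, -⟩ | ⟨β, U', h', hl, hU⟩ | ⟨β, U', i, h', hi, hleft, hl, hU⟩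
    · exact absurd h1 (by simp)
    · injection hl with h1 h2
      subst h1; subst h2
      obtain ⟨-, rfl⟩ := classW 2 U' h'
      refine ⟨le_refl 1, Or.inl ?_⟩
      rw [hU]; funext c
      simp only [W, U1, List.sum_cons, List.sum_nil, Prod.ext_iff]
      split_ifs <;> omega
    · obtain ⟨x, y, rfl⟩ := two_of_len hl (by simp)
      have hi2 : i < 2 := by simpa using hi
      interval_cases i
      · simp only [List.getD_cons_zero, List.set] at hl hU
        injection hl with h1 h2
        injection h2 with h2 h3
        subst h1; subst h2
        obtain ⟨hx, hcase⟩ := IH x (by omega) U' h'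
        refine ⟨by omega, ?_⟩
        rcases hcase with rfl | ⟨k, hk2, hkx, rfl⟩
        · refine Or.inl ?_
          rw [hU]; funext c
          simp only [U1, List.sum_cons, List.sum_nil, Prod.ext_iff]
          split_ifs <;> omega
        · refine Or.inr ⟨k, hk2, by omega, ?_⟩
          rw [hU]; funext c
          simp only [U2, List.sum_cons, List.sum_nil, Prod.ext_iff]
          split_ifs <;> omega
      · simp only [List.getD_cons_zero, List.getD_cons_succ, List.set] at hl hU
        injection hl with h1 h2
        injection h2 with h2 h3
        obtain rfl : y = 1 := by omega
        subst h1
        have hx1 : a ≠ 1 := by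
          have := hleft 0 (by omega)
          simpa using this
        obtain ⟨hx, rfl⟩ := classV a U' h'
        refine ⟨by omega, Or.inr ⟨a, by omega, le_refl a, ?_⟩⟩
        rw [hU]; funext c
        simp only [V, U2, List.sum_cons, List.sum_nil, Prod.ext_iff]
        split_ifs <;> omega

lemma classJ : ∀ b U, SCTChain [1, b] U →
    ∃ m, 1 ≤ m ∧ m ≤ b ∧ (2 ≤ m ∨ b ≤ 1) ∧ U = U3' b m := by
  intro b
  induction b using Nat.strong_induction_on with
  | _ b IH =>
    intro U h
    rcases chain_inv h with ⟨h1, -⟩ | ⟨β, U', h', hl, hU⟩ | ⟨β, U', i, h', hi, hleft, hl, hU⟩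
    · exact absurd h1 (by simp)
    · injection hl with h1 h2
      subst h2
      obtain ⟨hb, rfl⟩ := classW b U' h'
      refine ⟨b, hb, le_refl b, by omega, ?_⟩
      rw [hU]; funext c
      simp only [W, U3', List.sum_cons, List.sum_nil, Prod.ext_iff]
      split_ifs <;> omega
    · obtain ⟨x, y, rfl⟩ := two_of_len hl (by simp)
      have hi2 : i < 2 := by simpa using hi
      interval_cases i
      · simp only [List.getD_cons_zero, List.set] at hl hU
        injection hl with h1 h2
        obtain rfl : x = 0 := by omega
        exact absurd (chain_pos h' 0 (by simp)) (by omega)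
      · simp only [List.getD_cons_zero, List.getD_cons_succ, List.set] at hl hU
        injection hl with h1 h2
        injection h2 with h2 h3
        subst h1; subst h2
        have hy0 : 0 < y := chain_pos h' y (by simp)
        have hy1 : y ≠ 1 := by
          have := hleft 0 (by omega)
          simp at this
          omega
        obtain ⟨m, hm1, hmy, hm2, rfl⟩ := IH y (by omega) U' h'
        refine ⟨m, hm1, by omega, by omega, ?_⟩
        rw [hU]; funext c
        simp only [U3', List.sum_cons, List.sum_nil, Prod.ext_iff]
        split_ifs <;> omega

lemma classB : ∀ b U, SCTChain [2, b] U →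
    ∃ m q, 1 ≤ m ∧ m ≤ q ∧ q ≤ b ∧ (2 ≤ m ∨ q ≤ 1) ∧ (3 ≤ q ∨ b ≤ 2) ∧ U = U3 b m q := by
  intro b
  induction b using Nat.strong_induction_on with
  | _ b IH =>
    intro U h
    rcases chain_inv h with ⟨h1, -⟩ | ⟨β, U', h', hl, hU⟩ | ⟨β, U', i, h', hi, hleft, hl, hU⟩
    · exact absurd h1 (by simp)
    · injection hl with h1 h2
      omega
    · obtain ⟨x, y, rfl⟩ := two_of_len hl (by simp)
      have hi2 : i < 2 := by simpa using hi
      interval_cases i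
      · simp only [List.getD_cons_zero, List.set] at hl hU
        injection hl with h1 h2
        injection h2 with h2 h3
        obtain rfl : x = 1 := by omega
        subst h2
        obtain ⟨m, hm1, hmb, hm2, rfl⟩ := classJ b U' h'
        refine ⟨m, b, hm1, hmb, le_refl b, hm2, by omega, ?_⟩
        rw [hU]; funext c
        simp only [U3', U3, List.sum_cons, List.sum_nil, Prod.ext_iff]
        split_ifs <;> omega
      · simp only [List.getD_cons_zero, List.getD_cons_succ, List.set] at hl hU
        injection hl with h1 h2
        injection h2 with h2 h3
        subst h1; subst h2
        have hy0 : 0 < y := chain_pos h' y (by simp)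
        have hy2 : y ≠ 2 := by
          have := hleft 0 (by omega)
          simp at this
          omega
        obtain ⟨m, q, hm1, hmq, hqy, hm2, hq3, rfl⟩ := IH y (by omega) U' h'
        refine ⟨m, q, hm1, hmq, by omega, hm2, by omega, ?_⟩
        rw [hU]; funext c
        simp only [U3, List.sum_cons, List.sum_nil, Prod.ext_iff]
        split_ifs <;> omega

def toT (s : ℕ) (U : ℕ × ℕ → ℕ) : ℕ × ℕ → ℕ := fun c => if U c = 0 then 0 else s + 1 - U c

lemma locU1 {a : ℕ} {p : ℕ × ℕ} (h : U1 a p ≠ 0) :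
    (U1 a p = 1 ∧ p.1 = 1 ∧ p.2 = 0) ∨ (U1 a p = 2 ∧ p.1 = 1 ∧ p.2 = 1) ∨
    (U1 a p = p.2 + 3 ∧ p.1 = 0 ∧ p.2 < a) := by
  simp only [U1, Prod.ext_iff] at *
  split_ifs at h ⊢ <;> omega

lemma locU2 {a k : ℕ} {p : ℕ × ℕ} (h : U2 a k p ≠ 0) :
    (U2 a k p = 1 ∧ p.1 = 1 ∧ p.2 = 0) ∨ (U2 a k p = k + 2 ∧ p.1 = 1 ∧ p.2 = 1) ∨
    (U2 a k p = p.2 + 2 ∧ p.1 = 0 ∧ p.2 < a ∧ p.2 < k) ∨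
    (U2 a k p = p.2 + 3 ∧ p.1 = 0 ∧ p.2 < a ∧ k ≤ p.2) := by
  simp only [U2, Prod.ext_iff] at *
  split_ifs at h ⊢ <;> omega

lemma locU3 {b m q : ℕ} {p : ℕ × ℕ} (h : U3 b m q p ≠ 0) :
    (U3 b m q p = m + 1 ∧ p.1 = 0 ∧ p.2 = 0) ∨ (U3 b m q p = q + 2 ∧ p.1 = 0 ∧ p.2 = 1) ∨
    (U3 b m q p = p.2 + 1 ∧ p.1 = 1 ∧ p.2 < b ∧ p.2 < m) ∨
    (U3 b m q p = p.2 + 2 ∧ p.1 = 1 ∧ p.2 < b ∧ m ≤ p.2 ∧ p.2 < q) ∨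
    (U3 b m q p = p.2 + 3 ∧ p.1 = 1 ∧ p.2 < b ∧ q ≤ p.2) := by
  simp only [U3, Prod.ext_iff] at *
  split_ifs at h ⊢ <;> omega

lemma toT_ne {s : ℕ} {U : ℕ × ℕ → ℕ} {p : ℕ × ℕ} {i : ℕ} (h : toT s U p = i) (hi : 0 < i) :
    U p ≠ 0 ∧ s + 1 - U p = i := by
  simp only [toT] at h
  split_ifs at h with h0
  · omega
  · exact ⟨h0, h⟩

lemma toT_val {s v : ℕ} {U : ℕ × ℕ → ℕ} {p : ℕ × ℕ} (h : U p = v) (hv : 0 < v) :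
    toT s U p = s + 1 - v := by
  simp only [toT]
  rw [h, if_neg (by omega)]

lemma descA1 {a : ℕ} (ha : 3 ≤ a) : desC (toT (a + 2) (U1 a)) = {a} := by
  have h1 : U1 a (0, 0) = 3 := by simp [U1, Prod.ext_iff, show 0 < a by omega]
  have h2 : U1 a (1, 1) = 2 := by simp [U1, Prod.ext_iff]
  ext i
  simp only [desC, Set.mem_setOf_eq, Set.mem_singleton_iff]
  constructor
  · rintro ⟨hi, p, q, hp, hq, hle⟩
    obtain ⟨hUp, hp⟩ := toT_ne hp hi
    obtain ⟨hUq, hq⟩ := toT_ne hq (by omega)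
    rcases locU1 hUp with ⟨f1, f2, f3⟩ | ⟨f1, f2, f3⟩ | ⟨f1, f2, f3⟩ <;>
      rcases locU1 hUq with ⟨g1, g2, g3⟩ | ⟨g1, g2, g3⟩ | ⟨g1, g2, g3⟩ <;> omega
  · rintro rfl
    exact ⟨by omega, (0, 0), (1, 1), by rw [toT_val h1 (by omega)]; omega,
      by rw [toT_val h2 (by omega)]; omega, by norm_num⟩

lemma descA2 {a k : ℕ} (ha : 3 ≤ a) (hk : 2 ≤ k) (hka : k ≤ a) :
    desC (toT (a + 2) (U2 a k)) = {a + 1 - k, a + 1} := by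
  have h1 : U2 a k (1, 1) = k + 2 := by simp [U2, Prod.ext_iff]
  have h2 : U2 a k (0, k - 1) = k + 1 := by
    simp [U2, Prod.ext_iff, show k - 1 < a by omega, show k - 1 < k by omega] <;> omega
  have h3 : U2 a k (0, 0) = 2 := by
    simp [U2, Prod.ext_iff, show 0 < a by omega, show 0 < k by omega]
  have h4 : U2 a k (1, 0) = 1 := by simp [U2, Prod.ext_iff]
  ext i
  simp only [desC, Set.mem_setOf_eq, Set.mem_insert_iff, Set.mem_singleton_iff]
  constructor
  · rintro ⟨hi, p, q, hp, hq, hle⟩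
    obtain ⟨hUp, hp⟩ := toT_ne hp hi
    obtain ⟨hUq, hq⟩ := toT_ne hq (by omega)
    rcases locU2 hUp with ⟨f1, f2, f3⟩ | ⟨f1, f2, f3⟩ | ⟨f1, f2, f3, f4⟩ | ⟨f1, f2, f3, f4⟩ <;>
      rcases locU2 hUq with ⟨g1, g2, g3⟩ | ⟨g1, g2, g3⟩ | ⟨g1, g2, g3, g4⟩ | ⟨g1, g2, g3, g4⟩ <;>
      omega
  · rintro (rfl | rfl)
    · exact ⟨by omega, (1, 1), (0, k - 1), by rw [toT_val h1 (by omega)]; omega,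
        by rw [toT_val h2 (by omega)]; omega, by simp; omega⟩
    · exact ⟨by omega, (0, 0), (1, 0), by rw [toT_val h3 (by omega)]; omega,
        by rw [toT_val h4 (by omega)]; omega, by norm_num⟩

lemma descB {b m q : ℕ} (hb : 3 ≤ b) (hm : 2 ≤ m) (hmq : m ≤ q) (hq : 3 ≤ q) (hqb : q ≤ b) :
    desC (toT (b + 2) (U3 b m q)) =
      if m = q then {b + 2 - m} else {b + 1 - q, b + 2 - m} := by
  have hU00 : U3 b m q (0, 0) = m + 1 := by simp [U3, Prod.ext_iff]
  have hU1m : U3 b m q (1, m - 1) = m := by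
    simp [U3, Prod.ext_iff, show m - 1 < b by omega, show m - 1 < m by omega] <;> omega
  have hU01 : U3 b m q (0, 1) = q + 2 := by simp [U3, Prod.ext_iff]
  ext i
  split_ifs with hcase
  · subst hcase
    simp only [desC, Set.mem_setOf_eq, Set.mem_singleton_iff]
    constructor
    · rintro ⟨hi, p, qq, hp, hq', hle⟩
      obtain ⟨hUp, hp⟩ := toT_ne hp hi
      obtain ⟨hUq, hq'⟩ := toT_ne hq' (by omega)
      rcases locU3 hUp with ⟨f1, f2, f3⟩ | ⟨f1, f2, f3⟩ | ⟨f1, f2, f3, f4⟩ |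
          ⟨f1, f2, f3, f4, f5⟩ | ⟨f1, f2, f3, f4⟩ <;>
        rcases locU3 hUq with ⟨g1, g2, g3⟩ | ⟨g1, g2, g3⟩ | ⟨g1, g2, g3, g4⟩ |
          ⟨g1, g2, g3, g4, g5⟩ | ⟨g1, g2, g3, g4⟩ <;> omega
    · rintro rfl
      exact ⟨by omega, (0, 0), (1, m - 1), by rw [toT_val hU00 (by omega)]; omega,
        by rw [toT_val hU1m (by omega)]; omega, by simp⟩
  · simp only [desC, Set.mem_setOf_eq, Set.mem_insert_iff, Set.mem_singleton_iff]
    constructor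
    · rintro ⟨hi, p, qq, hp, hq', hle⟩
      obtain ⟨hUp, hp⟩ := toT_ne hp hi
      obtain ⟨hUq, hq'⟩ := toT_ne hq' (by omega)
      rcases locU3 hUp with ⟨f1, f2, f3⟩ | ⟨f1, f2, f3⟩ | ⟨f1, f2, f3, f4⟩ |
          ⟨f1, f2, f3, f4, f5⟩ | ⟨f1, f2, f3, f4⟩ <;>
        rcases locU3 hUq with ⟨g1, g2, g3⟩ | ⟨g1, g2, g3⟩ | ⟨g1, g2, g3, g4⟩ |
          ⟨g1, g2, g3, g4, g5⟩ | ⟨g1, g2, g3, g4⟩ <;> omega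
    · intro hmem
      have hU1q : U3 b m q (1, q - 1) = q + 1 := by
        simp [U3, Prod.ext_iff, show q - 1 < b by omega, show ¬(q - 1 < m) by omega,
          show q - 1 < q by omega] <;> omega
      rcases hmem with rfl | rfl
      · exact ⟨by omega, (0, 1), (1, q - 1), by rw [toT_val hU01 (by omega)]; omega,
          by rw [toT_val hU1q (by omega)]; omega, by simp; omega⟩
      · exact ⟨by omega, (0, 0), (1, m - 1), by rw [toT_val hU00 (by omega)]; omega,
          by rw [toT_val hU1m (by omega)]; omega, by simp⟩

lemma isSCT_iff {x y s : ℕ} (hs : x + y = s) {T : (ℕ × ℕ) → ℕ} :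
    IsSCT [x, y] T ↔ ∃ U, SCTChain [x, y] U ∧ T = toT s U := by
  subst hs
  unfold IsSCT toT
  simp only [List.sum_cons, List.sum_nil, add_zero]

/-- For `n ≥ 5`: (a) `T ↦ des_c(T)` is a bijection from the SCTx of shape
`(n-2, 2)` onto `{{n-2}} ∪ {{i, n-1} : 1 ≤ i ≤ n-3}`; (b) `T ↦ des_c(T)` is
a bijection from the SCTx of shape `(2, n-2)` onto
`{{i} : 2 ≤ i ≤ n-3} ∪ {{i, j} : 3 ≤ j ≤ n-2, 1 ≤ i ≤ j-2}`. -/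
theorem qs_two_row_descents_bijection (n : ℕ) (hn : 5 ≤ n) :
    (Function.Injective (fun T : {T // IsSCT [n - 2, 2] T} => desC T.1) ∧
      Set.range (fun T : {T // IsSCT [n - 2, 2] T} => desC T.1) =
        {S : Set ℕ | S = {n - 2} ∨
          ∃ i, 1 ≤ i ∧ i ≤ n - 3 ∧ S = {i, n - 1}}) ∧
    (Function.Injective (fun T : {T // IsSCT [2, n - 2] T} => desC T.1) ∧
      Set.range (fun T : {T // IsSCT [2, n - 2] T} => desC T.1) =
        {S : Set ℕ | (∃ i, 2 ≤ i ∧ i ≤ n - 3 ∧ S = {i}) ∨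
          ∃ i j, 3 ≤ j ∧ j ≤ n - 2 ∧ 1 ≤ i ∧ i ≤ j - 2 ∧ S = {i, j}}) := by
  have ha : 3 ≤ n - 2 := by omega
  have hs1 : n - 2 + 2 = n - 2 + 2 := rfl
  constructor
  · constructor
    · -- injectivity for shape (n-2, 2)
      rintro ⟨T, hT⟩ ⟨T', hT'⟩ hdes
      simp only at hdes
      obtain ⟨U, hU, rfl⟩ := (isSCT_iff (x := n - 2) (y := 2) rfl).mp hT
      obtain ⟨U', hU', rfl⟩ := (isSCT_iff (x := n - 2) (y := 2) rfl).mp hT'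
      ext1
      obtain ⟨-, hcU⟩ := classA _ _ hU
      obtain ⟨-, hcU'⟩ := classA _ _ hU'
      rcases hcU with rfl | ⟨k, hk2, hka, rfl⟩ <;> rcases hcU' with rfl | ⟨k', hk2', hka', rfl⟩
      · rfl
      · exfalso
        rw [descA1 ha, descA2 ha hk2' hka'] at hdes
        have h1 : (n - 2 + 1 : ℕ) ∈ ({n - 2 + 1 - k', n - 2 + 1} : Set ℕ) := by simp
        rw [← hdes] at h1
        simp only [Set.mem_singleton_iff] at h1
        omega
      · exfalso
        rw [descA2 ha hk2 hka, descA1 ha] at hdes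
        have h1 : (n - 2 + 1 : ℕ) ∈ ({n - 2 + 1 - k, n - 2 + 1} : Set ℕ) := by simp
        rw [hdes] at h1
        simp only [Set.mem_singleton_iff] at h1
        omega
      · rw [descA2 ha hk2 hka, descA2 ha hk2' hka'] at hdes
        have h1 : (n - 2 + 1 - k : ℕ) ∈ ({n - 2 + 1 - k, n - 2 + 1} : Set ℕ) := by simp
        rw [hdes] at h1
        simp only [Set.mem_singleton_iff, Set.mem_insert_iff] at h1
        obtain rfl : k = k' := by omega
        rfl
    · -- range for shape (n-2, 2)
      ext S
      simp only [Set.mem_range, Set.mem_setOf_eq]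
      constructor
      · rintro ⟨⟨T, hT⟩, rfl⟩
        simp only
        obtain ⟨U, hU, rfl⟩ := (isSCT_iff (x := n - 2) (y := 2) rfl).mp hT
        obtain ⟨-, hcU⟩ := classA _ _ hU
        rcases hcU with rfl | ⟨k, hk2, hka, rfl⟩
        · exact Or.inl (descA1 ha)
        · refine Or.inr ⟨n - 2 + 1 - k, by omega, by omega, ?_⟩
          rw [descA2 ha hk2 hka]
          ext x
          simp only [Set.mem_insert_iff, Set.mem_singleton_iff]
          omega
      · rintro (rfl | ⟨i, hi1, hi2, rfl⟩)
        · refine ⟨⟨_, (isSCT_iff (x := n - 2) (y := 2) rfl).mpr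
            ⟨U1 (n - 2), soundU1 (n - 2) (by omega), rfl⟩⟩, ?_⟩
          simpa using descA1 ha
        · refine ⟨⟨_, (isSCT_iff (x := n - 2) (y := 2) rfl).mpr
            ⟨U2 (n - 2) (n - 1 - i), soundU2 (n - 2) (n - 1 - i) (by omega) (by omega), rfl⟩⟩, ?_⟩
          simp only
          rw [descA2 ha (by omega) (by omega)]
          ext x
          simp only [Set.mem_insert_iff, Set.mem_singleton_iff]
          omega
  · constructor
    · -- injectivity for shape (2, n-2)
      rintro ⟨T, hT⟩ ⟨T', hT'⟩ hdes
      simp only at hdes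
      obtain ⟨U, hU, rfl⟩ := (isSCT_iff (x := 2) (y := n - 2) (s := n - 2 + 2) (by omega)).mp hT
      obtain ⟨U', hU', rfl⟩ := (isSCT_iff (x := 2) (y := n - 2) (s := n - 2 + 2) (by omega)).mp hT'
      ext1
      obtain ⟨m, q, c1, c2, c3, c4, c5, rfl⟩ := classB _ _ hU
      obtain ⟨m', q', d1, d2, d3, d4, d5, rfl⟩ := classB _ _ hU'
      have hq3 : 3 ≤ q := by omega
      have hm2 : 2 ≤ m := by omega
      have hq3' : 3 ≤ q' := by omega
      have hm2' : 2 ≤ m' := by omega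
      rw [descB ha hm2 c2 hq3 c3, descB ha hm2' d2 hq3' d3] at hdes
      by_cases e : m = q <;> by_cases e' : m' = q'
      · rw [if_pos e, if_pos e'] at hdes
        have h1 := Set.singleton_eq_singleton_iff.mp hdes
        obtain rfl : m = m' := by omega
        obtain rfl : q = q' := by omega
        rfl
      · exfalso
        rw [if_pos e, if_neg e'] at hdes
        have h1 : (n - 2 + 1 - q' : ℕ) ∈ ({n - 2 + 1 - q', n - 2 + 2 - m'} : Set ℕ) := by simp
        have h2 : (n - 2 + 2 - m' : ℕ) ∈ ({n - 2 + 1 - q', n - 2 + 2 - m'} : Set ℕ) := by simp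
        rw [← hdes] at h1 h2
        simp only [Set.mem_singleton_iff] at h1 h2
        omega
      · exfalso
        rw [if_neg e, if_pos e'] at hdes
        have h1 : (n - 2 + 1 - q : ℕ) ∈ ({n - 2 + 1 - q, n - 2 + 2 - m} : Set ℕ) := by simp
        have h2 : (n - 2 + 2 - m : ℕ) ∈ ({n - 2 + 1 - q, n - 2 + 2 - m} : Set ℕ) := by simp
        rw [hdes] at h1 h2
        simp only [Set.mem_singleton_iff] at h1 h2
        omega
      · rw [if_neg e, if_neg e'] at hdes
        have h1 : (n - 2 + 1 - q : ℕ) ∈ ({n - 2 + 1 - q, n - 2 + 2 - m} : Set ℕ) := by simp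
        have h2 : (n - 2 + 2 - m : ℕ) ∈ ({n - 2 + 1 - q, n - 2 + 2 - m} : Set ℕ) := by simp
        have h3 : (n - 2 + 1 - q' : ℕ) ∈ ({n - 2 + 1 - q', n - 2 + 2 - m'} : Set ℕ) := by simp
        have h4 : (n - 2 + 2 - m' : ℕ) ∈ ({n - 2 + 1 - q', n - 2 + 2 - m'} : Set ℕ) := by simp
        rw [hdes] at h1 h2
        rw [← hdes] at h3 h4
        simp only [Set.mem_singleton_iff, Set.mem_insert_iff] at h1 h2 h3 h4
        obtain rfl : m = m' := by omega
        obtain rfl : q = q' := by omega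
        rfl
    · -- range for shape (2, n-2)
      ext S
      simp only [Set.mem_range, Set.mem_setOf_eq]
      constructor
      · rintro ⟨⟨T, hT⟩, rfl⟩
        simp only
        obtain ⟨U, hU, rfl⟩ := (isSCT_iff (x := 2) (y := n - 2) (s := n - 2 + 2) (by omega)).mp hT
        obtain ⟨m, q, c1, c2, c3, c4, c5, rfl⟩ := classB _ _ hU
        have hq3 : 3 ≤ q := by omega
        have hm2 : 2 ≤ m := by omega
        rw [descB ha hm2 c2 hq3 c3]
        by_cases e : m = q
        · rw [if_pos e]
          refine Or.inl ⟨n - 2 + 2 - m, by omega, by omega, rfl⟩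
        · rw [if_neg e]
          refine Or.inr ⟨n - 2 + 1 - q, n - 2 + 2 - m, by omega, by omega, by omega,
            by omega, rfl⟩
      · rintro (⟨i, hi1, hi2, rfl⟩ | ⟨i, j, hj1, hj2, hi1, hi2, rfl⟩)
        · refine ⟨⟨_, (isSCT_iff (x := 2) (y := n - 2) (s := n - 2 + 2) (by omega)).mpr
            ⟨U3 (n - 2) (n - i) (n - i),
              soundU3 (n - 2) (n - i) (n - i) (by omega) (by omega) (by omega) (by omega), rfl⟩⟩, ?_⟩
          simp only
          rw [descB ha (by omega) (by omega) (by omega) (by omega), if_pos rfl]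
          ext x
          simp only [Set.mem_singleton_iff]
          omega
        · refine ⟨⟨_, (isSCT_iff (x := 2) (y := n - 2) (s := n - 2 + 2) (by omega)).mpr
            ⟨U3 (n - 2) (n - j) (n - 1 - i),
              soundU3 (n - 2) (n - j) (n - 1 - i) (by omega) (by omega) (by omega) (by omega), rfl⟩⟩, ?_⟩
          simp only
          rw [descB ha (by omega) (by omega) (by omega) (by omega), if_neg (by omega)]
          ext x
          simp only [Set.mem_insert_iff, Set.mem_singleton_iff]
          omega
end

section
/- For n ≥ 7, the map T ↦ des_c(T) is a bijection from the set of standard composition tableaux of shape (n−3, 3) onto the union of {{n−3}}, {{n−4, n−2}}, {{i, n−2} : 1 ≤ i ≤ n−5}, {{i, n−1} : 2 ≤ i ≤ n−4}, and {{i, j, n−1} : i, j ∈ [n−3], i < j, j ≠ i+1}. -/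
def singleRowU (y : ℕ) : (ℕ × ℕ) → ℕ :=
  fun c => if c.1 = 0 ∧ c.2 < y then c.2 + 1 else 0

def mkU (x y : ℕ) (a : ℕ → ℕ) : (ℕ × ℕ) → ℕ :=
  fun c => if c.1 = 1 ∧ c.2 < y then a c.2 + c.2 + 1
    else if c.1 = 0 ∧ c.2 < x then
      c.2 + 1 + ((Finset.range y).filter (fun c' => a c' ≤ c.2)).card
    else 0

def Cond (x y : ℕ) (a : ℕ → ℕ) : Prop :=
  a 0 = 0 ∧ (∀ c, c + 1 < y → a c ≤ a (c + 1)) ∧ (∀ c < y, a c ≤ x) ∧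
    (∀ c < y, a c ≠ 0 → a c ≠ c)

lemma cond_mono {x y a} (h : Cond x y a) {c d : ℕ} (hcd : c ≤ d) (hd : d < y) :
    a c ≤ a d := by
  induction d with
  | zero => have : c = 0 := by omega
            simp [this]
  | succ d ih =>
    rcases Nat.eq_or_lt_of_le hcd with rfl | hlt
    · exact le_refl _
    · exact le_trans (ih (by omega) (by omega)) (h.2.1 d hd)

lemma mkU_congr {x y : ℕ} {a a' : ℕ → ℕ} (h : ∀ c < y, a c = a' c) :
    mkU x y a = mkU x y a' := by
  funext c
  unfold mkU
  by_cases h1 : c.1 = 1 ∧ c.2 < y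
  · simp [h1, h c.2 h1.2]
  · simp only [if_neg h1]
    by_cases h2 : c.1 = 0 ∧ c.2 < x
    · simp only [if_pos h2]
      congr 2
      apply Finset.filter_congr
      intro z hz
      simp only [Finset.mem_range] at hz
      simp [h z hz]
    · simp [h2]

lemma mkU_prepend (y : ℕ) :
    (fun c : ℕ × ℕ => if c = (0, 0) then y + 1
        else if c.1 = 0 then 0 else singleRowU y (c.1 - 1, c.2)) =
      mkU 1 y (fun _ => 0) := by
  funext c
  obtain ⟨r, j⟩ := c
  have hcard : ((Finset.range y).filter (fun _ => (0:ℕ) ≤ j)).card = y := by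
    rw [Finset.filter_true_of_mem (fun z _ => Nat.zero_le j), Finset.card_range]
  by_cases hc : r = 0 ∧ j = 0
  · obtain ⟨rfl, rfl⟩ := hc
    rw [if_pos rfl]
    simp [mkU, hcard]
    omega
  · rw [if_neg (by simpa [Prod.ext_iff] using hc)]
    rcases r with _ | r
    · have hj0 : j ≠ 0 := by tauto
      simp [mkU, show ¬ j < 1 by omega]
    · simp only [mkU, singleRowU]
      rcases r with _ | r
      · by_cases hj : j < y <;> simp [hj]
      · simp [show r+1+1 ≠ 1 by omega, show r+1+1 ≠ 0 by omega]

lemma mkU_grow0 (x y : ℕ) (a : ℕ → ℕ) (hb : ∀ c < y, a c ≤ x) :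
    (fun c : ℕ × ℕ => if c = ((0:ℕ), x) then x + y + 1 else mkU x y a c) =
      mkU (x + 1) y a := by
  funext c
  obtain ⟨r, j⟩ := c
  by_cases hc : r = 0 ∧ j = x
  · obtain ⟨rfl, rfl⟩ := hc
    rw [if_pos rfl]
    have hcard : ((Finset.range y).filter (fun c' => a c' ≤ j)).card = y := by
      rw [Finset.filter_true_of_mem (fun z hz => hb z (Finset.mem_range.mp hz)),
        Finset.card_range]
    simp [mkU, hcard]
    omega
  · rw [if_neg (by simpa [Prod.ext_iff] using hc)]
    simp only [mkU]
    rcases r with _ | r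
    · have hjx : j ≠ x := by tauto
      by_cases hj : j < x
      · simp [hj, show j < x + 1 by omega]
      · simp [hj, show ¬ j < x + 1 by omega]
    · simp [show r + 1 ≠ 0 by omega]

lemma mkU_grow1 (x y : ℕ) (a : ℕ → ℕ) (hay : a y = x) :
    (fun c : ℕ × ℕ => if c = ((1:ℕ), y) then x + y + 1 else mkU x y a c) =
      mkU x (y + 1) a := by
  funext c
  obtain ⟨r, j⟩ := c
  by_cases hc : r = 1 ∧ j = y
  · obtain ⟨rfl, rfl⟩ := hc
    rw [if_pos rfl]
    simp [mkU, hay]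
    try omega
  · rw [if_neg (by simpa [Prod.ext_iff] using hc)]
    simp only [mkU]
    rcases r with _ | r
    · by_cases hj : j < x
      · have hfil : (Finset.range (y+1)).filter (fun c' => a c' ≤ j) =
            (Finset.range y).filter (fun c' => a c' ≤ j) := by
          rw [Finset.range_add_one, Finset.filter_insert, if_neg (by omega)]
        simp [hj, hfil]
      · simp [hj]
    · rcases r with _ | r
      · have hjy : j ≠ y := by tauto
        by_cases hj : j < y
        · simp [hj, show j < y + 1 by omega]
        · simp [hj, show ¬ j < y + 1 by omega]
      · simp [show r+1+1 ≠ 1 by omega, show r+1+1 ≠ 0 by omega]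

def Motive (α : List ℕ) (U : (ℕ × ℕ) → ℕ) : Prop :=
  (α = [] → U = fun _ => 0) ∧
  (∀ y, α = [y] → 1 ≤ y ∧ U = singleRowU y) ∧
  (∀ x y, α = [x, y] → 1 ≤ x ∧ 1 ≤ y ∧ ∃ a, Cond x y a ∧ U = mkU x y a)

theorem sct_classify {α U} (h : SCTChain α U) : Motive α U := by
  induction h with
  | nil =>
    exact ⟨fun _ => rfl, fun y hy => by simp at hy, fun x y hxy => by simp at hxy⟩
  | @prepend β U h ih =>
    refine ⟨by simp, ?_, ?_⟩
    · rintro y hy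
      injection hy with h1 h2
      subst h2
      have hy1 : y = 1 := h1.symm
      subst hy1
      rw [ih.1 rfl]
      refine ⟨le_refl _, ?_⟩
      funext c
      obtain ⟨r, j⟩ := c
      simp only [List.sum_nil, singleRowU]
      by_cases hc : r = 0 ∧ j = 0
      · obtain ⟨rfl, rfl⟩ := hc
        rw [if_pos rfl]
        simp
      · rw [if_neg (by simpa [Prod.ext_iff] using hc)]
        rcases r with _ | r
        · have hj0 : j ≠ 0 := by tauto
          simp [show ¬ j < 1 by omega]
        · simp [show r + 1 ≠ 0 by omega]
    · rintro x y hxy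
      injection hxy with h1 h2
      subst h2
      have hx1 : x = 1 := h1.symm
      subst hx1
      obtain ⟨hy1, hU⟩ := ih.2.1 y rfl
      subst hU
      refine ⟨by omega, hy1, fun _ => 0,
        ⟨rfl, fun _ _ => le_refl _, fun _ _ => Nat.zero_le _, fun _ _ h => absurd rfl h⟩, ?_⟩
      have := mkU_prepend y
      rw [← this]
      funext c
      by_cases hc : c = ((0:ℕ), (0:ℕ)) <;> simp [hc]
  | @grow β U h i hi hleft ih =>
    have hlen := congrArg List.length (rfl :
      β.set i (β.getD i 0 + 1) = β.set i (β.getD i 0 + 1))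
    refine ⟨?_, ?_, ?_⟩
    · intro hnil
      have := congrArg List.length hnil
      rw [List.length_set] at this
      simp at this
      exact absurd hi (by simp [this])
    · rintro y hy
      have hl : β.length = 1 := by
        have := congrArg List.length hy
        simpa using this
      obtain ⟨b, rfl⟩ : ∃ b, β = [b] := by
        cases β with
        | nil => simp at hl
        | cons hd tl => cases tl with
          | nil => exact ⟨hd, rfl⟩
          | cons h2 t2 => simp at hl
      have hi0 : i = 0 := by simpa using hi
      subst hi0
      simp only [List.set_cons_zero, List.getD_cons_zero] at hy ⊢
      injection hy with h1 h2
      subst h1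
      obtain ⟨hb1, hU⟩ := ih.2.1 b rfl
      subst hU
      refine ⟨by omega, ?_⟩
      funext c
      obtain ⟨r, j⟩ := c
      simp only [List.sum_cons, List.sum_nil, singleRowU]
      by_cases hc : r = 0 ∧ j = b
      · obtain ⟨rfl, rfl⟩ := hc
        rw [if_pos rfl]
        simp
        try omega
      · rw [if_neg (by simpa [Prod.ext_iff] using hc)]
        rcases r with _ | r
        · have hjb : j ≠ b := by tauto
          by_cases hj : j < b
          · simp [hj, show j < b + 1 by omega]
          · simp [hj, show ¬ j < b + 1 by omega]
        · simp [show r + 1 ≠ 0 by omega]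
    · rintro x y hxy
      have hl : β.length = 2 := by
        have := congrArg List.length hxy
        simpa using this
      obtain ⟨b0, b1, rfl⟩ : ∃ b0 b1, β = [b0, b1] := by
        cases β with
        | nil => simp at hl
        | cons hd tl => cases tl with
          | nil => simp at hl
          | cons h2 t2 => cases t2 with
            | nil => exact ⟨hd, h2, rfl⟩
            | cons h3 t3 => simp at hl
      rcases (by omega : i = 0 ∨ i = 1) with rfl | rfl
      · -- grow row 0
        simp only [List.set_cons_zero, List.getD_cons_zero] at hxy ⊢
        injection hxy with h1 h2
        injection h2 with h2 h3
        subst h1; subst h2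
        obtain ⟨hx1, hy1, a, hcond, hU⟩ := ih.2.2 b0 b1 rfl
        subst hU
        refine ⟨by omega, hy1, a,
          ⟨hcond.1, hcond.2.1, fun c hc => le_trans (hcond.2.2.1 c hc) (by omega),
            hcond.2.2.2⟩, ?_⟩
        have := mkU_grow0 b0 b1 a hcond.2.2.1
        rw [← this]
        funext c
        by_cases hc : c = ((0:ℕ), b0) <;> simp [hc]
      · -- grow row 1
        simp only [List.set, List.getD_cons_succ, List.getD_cons_zero] at hxy hleft ⊢
        injection hxy with h1 h2
        injection h2 with h2 h3
        subst h1; subst h2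
        obtain ⟨hx1, hy1, a, hcond, hU⟩ := ih.2.2 b0 b1 rfl
        subst hU
        have hne : b0 ≠ b1 := by
          have := hleft 0 (by omega)
          simpa using this
        refine ⟨hx1, by omega, fun c => if c = b1 then b0 else a c, ?_, ?_⟩
        · refine ⟨?_, ?_, ?_, ?_⟩
          · simp only []
            rw [if_neg (by omega)]
            exact hcond.1
          · intro c hc
            simp only []
            by_cases h1 : c = b1
            · exact absurd hc (by omega)
            · rw [if_neg h1]
              by_cases h2 : c + 1 = b1
              · rw [if_pos h2]
                exact hcond.2.2.1 c (by omega)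
              · rw [if_neg h2]
                exact hcond.2.1 c (by omega)
          · intro c hc
            simp only []
            by_cases h1 : c = b1
            · simp [h1]
            · rw [if_neg h1]; exact hcond.2.2.1 c (by omega)
          · intro c hc
            simp only []
            by_cases h1 : c = b1
            · subst h1; rw [if_pos rfl]; intro _; omega
            · rw [if_neg h1]; exact hcond.2.2.2 c (by omega)
        · have heq : mkU b0 b1 a = mkU b0 b1 (fun c => if c = b1 then b0 else a c) := by
            apply mkU_congr
            intro c hc
            rw [if_neg (by omega)]
          rw [heq]
          have := mkU_grow1 b0 b1 (fun c => if c = b1 then b0 else a c) (by simp)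
          rw [← this]
          funext c
          by_cases hc : c = ((1:ℕ), b1) <;> simp [hc]

lemma chain_singleRow' : ∀ y, 1 ≤ y → SCTChain [y] (singleRowU y) := by
  intro y
  induction y with
  | zero => omega
  | succ y ih =>
    intro _
    by_cases hy : y = 0
    · subst hy
      have h := SCTChain.prepend SCTChain.nil
      have : (fun c : ℕ × ℕ => if c = (0, 0) then List.sum [] + 1
          else if c.1 = 0 then 0 else (fun _ => (0:ℕ)) (c.1 - 1, c.2)) = singleRowU 1 := by
        funext c
        obtain ⟨r, j⟩ := c
        by_cases hc : r = 0 ∧ j = 0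
        · obtain ⟨rfl, rfl⟩ := hc
          simp [singleRowU]
        · rw [if_neg (by simpa [Prod.ext_iff] using hc)]
          rcases r with _ | r
          · have : j ≠ 0 := by tauto
            simp [singleRowU, show ¬ j < 1 by omega]
          · simp [singleRowU, show r + 1 ≠ 0 by omega]
      rw [← this]
      exact h
    · have h0 := ih (by omega)
      have h1 := SCTChain.grow h0 0 (by simp) (by intro j hj; omega)
      have h2 : SCTChain [y + 1] (fun c => if c = ((0:ℕ), y) then y + 1 else singleRowU y c) := by
        simpa using h1
      have : (fun c : ℕ × ℕ => if c = ((0:ℕ), y) then y + 1 else singleRowU y c) =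
          singleRowU (y + 1) := by
        funext c
        obtain ⟨r, j⟩ := c
        by_cases hc : r = 0 ∧ j = y
        · obtain ⟨rfl, rfl⟩ := hc
          simp [singleRowU]
        · rw [if_neg (by simpa [Prod.ext_iff] using hc)]
          rcases r with _ | r
          · have hjy : j ≠ y := by tauto
            by_cases hj : j < y
            · simp [singleRowU, hj, show j < y + 1 by omega]
            · simp [singleRowU, hj, show ¬ j < y + 1 by omega]
          · simp [singleRowU, show r + 1 ≠ 0 by omega]
      rw [← this]
      exact h2

lemma chain_mk_aux : ∀ N x y a, x + y ≤ N → 1 ≤ x → 1 ≤ y → Cond x y a →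
    SCTChain [x, y] (mkU x y a) := by
  intro N
  induction N with
  | zero => intro x y a h hx hy _; omega
  | succ N ih =>
    intro x y a hN hx hy hcond
    by_cases hlast : a (y - 1) = x
    · -- last step grew row 1
      have hy2 : 2 ≤ y := by
        rcases Nat.eq_or_lt_of_le hy with h | h
        · exfalso; rw [← h] at hlast; simp at hlast; rw [hcond.1] at hlast; omega
        · omega
      obtain ⟨y', rfl⟩ : ∃ y', y = y' + 1 := ⟨y - 1, by omega⟩
      simp only [Nat.add_sub_cancel] at hlast
      have hcond' : Cond x y' a :=
        ⟨hcond.1, fun c hc => hcond.2.1 c (by omega), fun c hc => hcond.2.2.1 c (by omega),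
          fun c hc => hcond.2.2.2 c (by omega)⟩
      have h0 := ih x y' a (by omega) hx (by omega) hcond'
      have hxy' : x ≠ y' := by
        have := hcond.2.2.2 y' (by omega)
        rw [hlast] at this
        exact this (by omega)
      have h1 := SCTChain.grow h0 1 (by simp) (by
        intro j hj
        have : j = 0 := by omega
        subst this
        simpa using hxy')
      have h2 : SCTChain [x, y' + 1]
          (fun c => if c = ((1:ℕ), y') then x + y' + 1 else mkU x y' a c) := by
        simpa using h1
      rwa [mkU_grow1 x y' a hlast] at h2
    · have hbound : ∀ c < y, a c ≤ x - 1 := by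
        intro c hc
        have h1 : a c ≤ a (y - 1) := cond_mono hcond (by omega) (by omega)
        have h2 : a (y - 1) ≤ x := hcond.2.2.1 (y - 1) (by omega)
        omega
      by_cases hx1 : x = 1
      · -- base : prepend onto single row
        subst hx1
        have hall : ∀ c < y, a c = 0 := by
          intro c hc; have := hbound c hc; omega
        have h0 := SCTChain.prepend (chain_singleRow' y hy)
        have h2 : SCTChain [1, y] (fun c : ℕ × ℕ => if c = (0, 0) then y + 1
            else if c.1 = 0 then 0 else singleRowU y (c.1 - 1, c.2)) := by
          simpa using h0
        rw [mkU_prepend y] at h2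
        rwa [mkU_congr (a := a) (a' := fun _ => 0) hall] 
      · obtain ⟨x', rfl⟩ : ∃ x', x = x' + 1 := ⟨x - 1, by omega⟩
        have hcond' : Cond x' y a :=
          ⟨hcond.1, hcond.2.1, fun c hc => by have := hbound c hc; omega, hcond.2.2.2⟩
        have h0 := ih x' y a (by omega) (by omega) hy hcond'
        have h1 := SCTChain.grow h0 0 (by simp) (by intro j hj; omega)
        have h2 : SCTChain [x' + 1, y]
            (fun c => if c = ((0:ℕ), x') then x' + y + 1 else mkU x' y a c) := by
          simpa using h1
        rwa [mkU_grow0 x' y a (fun c hc => by have := hbound c hc; omega)] at h2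

lemma chain_mk (x y : ℕ) (a : ℕ → ℕ) (hx : 1 ≤ x) (hy : 1 ≤ y) (hcond : Cond x y a) :
    SCTChain [x, y] (mkU x y a) :=
  chain_mk_aux (x + y) x y a le_rfl hx hy hcond

def canonA (a1 a2 : ℕ) : ℕ → ℕ := fun c => if c = 1 then a1 else if c = 2 then a2 else 0

def canonU (m a1 a2 : ℕ) : (ℕ × ℕ) → ℕ := mkU m 3 (canonA a1 a2)

def canonT (m a1 a2 : ℕ) : (ℕ × ℕ) → ℕ :=
  fun c => if canonU m a1 a2 c = 0 then 0 else m + 4 - canonU m a1 a2 c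

def Valid (m a1 a2 : ℕ) : Prop := a1 ≤ a2 ∧ a2 ≤ m ∧ a1 ≠ 1 ∧ a2 ≠ 2

lemma card3 (q : ℕ → Prop) [DecidablePred q] :
    ((Finset.range 3).filter q).card =
      (if q 0 then 1 else 0) + (if q 1 then 1 else 0) + (if q 2 then 1 else 0) := by
  have h3 : Finset.range 3 = {0, 1, 2} := by decide
  rw [h3]
  by_cases h0 : q 0 <;> by_cases h1 : q 1 <;> by_cases h2 : q 2 <;>
    simp [Finset.filter_insert, Finset.filter_singleton, h0, h1, h2]

lemma canonU_10 (m a1 a2 : ℕ) : canonU m a1 a2 (1, 0) = 1 := by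
  simp [canonU, mkU, canonA]

lemma canonU_11 (m a1 a2 : ℕ) : canonU m a1 a2 (1, 1) = a1 + 2 := by
  simp [canonU, mkU, canonA]

lemma canonU_12 (m a1 a2 : ℕ) : canonU m a1 a2 (1, 2) = a2 + 3 := by
  simp [canonU, mkU, canonA]

lemma canonU_row0 (m a1 a2 j : ℕ) (hj : j < m) :
    canonU m a1 a2 (0, j) =
      j + 2 + (if a1 ≤ j then 1 else 0) + (if a2 ≤ j then 1 else 0) := by
  simp only [canonU, mkU]
  rw [card3]
  simp [hj, canonA]
  try (split_ifs <;> omega)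

lemma canonU_cases (m a1 a2 : ℕ) (p : ℕ × ℕ) :
    canonU m a1 a2 p = 0 ∨ p = (1, 0) ∨ p = (1, 1) ∨ p = (1, 2) ∨ (p.1 = 0 ∧ p.2 < m) := by
  obtain ⟨r, j⟩ := p
  simp only [canonU, mkU]
  by_cases h1 : r = 1 ∧ j < 3
  · right
    obtain ⟨rfl, hj⟩ := h1
    interval_cases j <;> simp
  · by_cases h2 : r = 0 ∧ j < m
    · right; right; right; right; exact h2
    · left
      rw [if_neg (by simpa using h1), if_neg (by simpa using h2)]

lemma canonU_le (m a1 a2 : ℕ) (hv : Valid m a1 a2) (p : ℕ × ℕ) :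
    canonU m a1 a2 p ≤ m + 3 := by
  obtain ⟨ha12, ha2m, _, _⟩ := hv
  rcases canonU_cases m a1 a2 p with h | h | h | h | h
  · omega
  · rw [h, canonU_10]; omega
  · rw [h, canonU_11]; omega
  · rw [h, canonU_12]; omega
  · obtain ⟨r0, hj⟩ := h
    obtain ⟨r, j⟩ := p
    simp only at r0 hj
    subst r0
    rw [canonU_row0 m a1 a2 j hj]
    split_ifs <;> omega

/-- possible (value, column) pairs of cells of the canonical tableau -/
def Cell (m a1 a2 v col : ℕ) : Prop :=
  (v = 1 ∧ col = 0) ∨ (v = a1 + 2 ∧ col = 1) ∨ (v = a2 + 3 ∧ col = 2) ∨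
    (∃ j t1 t2, j < m ∧ col = j ∧
      ((a1 ≤ j ∧ t1 = 1) ∨ (j < a1 ∧ t1 = 0)) ∧
      ((a2 ≤ j ∧ t2 = 1) ∨ (j < a2 ∧ t2 = 0)) ∧ v = j + 2 + t1 + t2)

lemma cell_of {m a1 a2 : ℕ} {p : ℕ × ℕ} {v : ℕ} (h : canonU m a1 a2 p = v)
    (hv : 1 ≤ v) : Cell m a1 a2 v p.2 := by
  rcases canonU_cases m a1 a2 p with h0 | h0 | h0 | h0 | h0
  · omega
  · subst h0; rw [canonU_10] at h; left; exact ⟨h.symm, rfl⟩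
  · subst h0; rw [canonU_11] at h; right; left; exact ⟨h.symm, rfl⟩
  · subst h0; rw [canonU_12] at h; right; right; left; exact ⟨h.symm, rfl⟩
  · obtain ⟨r0, hj⟩ := h0
    obtain ⟨r, j⟩ := p
    simp only at r0 hj ⊢
    subst r0
    rw [canonU_row0 m a1 a2 j hj] at h
    right; right; right
    refine ⟨j, if a1 ≤ j then 1 else 0, if a2 ≤ j then 1 else 0, hj, rfl, ?_, ?_, h.symm⟩
    · split_ifs with h1
      · exact Or.inl ⟨h1, rfl⟩
      · exact Or.inr ⟨by omega, rfl⟩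
    · split_ifs with h1
      · exact Or.inl ⟨h1, rfl⟩
      · exact Or.inr ⟨by omega, rfl⟩

lemma cell_to {m a1 a2 v col : ℕ} (h : Cell m a1 a2 v col) :
    ∃ p : ℕ × ℕ, canonU m a1 a2 p = v ∧ p.2 = col := by
  rcases h with ⟨hv, hc⟩ | ⟨hv, hc⟩ | ⟨hv, hc⟩ | ⟨j, t1, t2, hj, hc, ht1, ht2, hv⟩
  · exact ⟨(1, 0), by rw [canonU_10]; omega, hc.symm⟩
  · exact ⟨(1, 1), by rw [canonU_11]; omega, hc.symm⟩
  · exact ⟨(1, 2), by rw [canonU_12]; omega, hc.symm⟩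
  · refine ⟨(0, j), ?_, hc.symm⟩
    rw [canonU_row0 m a1 a2 j hj]
    split_ifs <;> omega

lemma mem_desC_iff (m a1 a2 : ℕ) (hv : Valid m a1 a2) (i : ℕ) :
    i ∈ desC (canonT m a1 a2) ↔
      1 ≤ i ∧ i + 2 ≤ m + 4 ∧ ∃ cp cq, Cell m a1 a2 (m + 4 - i) cp ∧
        Cell m a1 a2 (m + 3 - i) cq ∧ cp ≤ cq := by
  constructor
  · rintro ⟨hi, p, q, hp, hq, hpq⟩
    have hup : canonU m a1 a2 p = m + 4 - i ∧ i + 1 ≤ m + 4 := by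
      have hb := canonU_le m a1 a2 hv p
      simp only [canonT] at hp
      split_ifs at hp with h0 <;> omega
    have huq : canonU m a1 a2 q = m + 3 - i ∧ i + 2 ≤ m + 4 := by
      have hb := canonU_le m a1 a2 hv q
      simp only [canonT] at hq
      split_ifs at hq with h0 <;> omega
    exact ⟨hi, huq.2, p.2, q.2, cell_of hup.1 (by omega), cell_of huq.1 (by omega), hpq⟩
  · rintro ⟨hi, hile, cp, cq, hcp, hcq, hle⟩
    obtain ⟨p, hpU, hp2⟩ := cell_to hcp
    obtain ⟨q, hqU, hq2⟩ := cell_to hcq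
    refine ⟨hi, p, q, ?_, ?_, by omega⟩
    · simp only [canonT, hpU]
      rw [if_neg (by omega)]
      omega
    · simp only [canonT, hqU]
      rw [if_neg (by omega)]
      omega

/-- explicit descent set -/
def D (m a1 a2 : ℕ) : Set ℕ :=
  {i | (a1 = 0 ∧ a2 = 0 ∧ i = m) ∨ (a1 = 0 ∧ 1 ≤ a2 ∧ i = m + 1) ∨
    (1 ≤ a1 ∧ i = m + 2) ∨ (2 ≤ a1 ∧ i = m + 2 - a1) ∨
    (3 ≤ a2 ∧ a1 ≠ a2 ∧ i = m + 1 - a2) ∨ (a2 = 1 ∧ i = m - 1)}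

set_option maxHeartbeats 2000000 in
lemma desC_canon (m a1 a2 : ℕ) (hm : 4 ≤ m) (hv : Valid m a1 a2) :
    desC (canonT m a1 a2) = D m a1 a2 := by
  obtain ⟨ha12, ha2m, ha1, ha2⟩ := hv
  ext i
  rw [mem_desC_iff m a1 a2 ⟨ha12, ha2m, ha1, ha2⟩ i]
  simp only [D, Set.mem_setOf_eq]
  constructor
  · rintro ⟨hi, hile, cp, cq, hcp, hcq, hle⟩
    rcases hcp with ⟨hv1, hc1⟩ | ⟨hv1, hc1⟩ | ⟨hv1, hc1⟩ |
        ⟨j, t1, t2, hj, hc1, ht1, ht2, hv1⟩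
    · rcases hcq with ⟨hw1, hd1⟩ | ⟨hw1, hd1⟩ | ⟨hw1, hd1⟩ |
          ⟨j', t1', t2', hj', hd1, ht1', ht2', hw1⟩ <;> exact absurd hw1 (by omega)
    · rcases hcq with ⟨hw1, hd1⟩ | ⟨hw1, hd1⟩ | ⟨hw1, hd1⟩ |
          ⟨j', t1', t2', hj', hd1, ht1', ht2', hw1⟩
      · exact absurd hle (by omega)
      · exact absurd hw1 (by omega)
      · exact absurd hw1 (by omega)
      · exact Or.inr (Or.inr (Or.inr (Or.inl (by omega))))
    · rcases hcq with ⟨hw1, hd1⟩ | ⟨hw1, hd1⟩ | ⟨hw1, hd1⟩ |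
          ⟨j', t1', t2', hj', hd1, ht1', ht2', hw1⟩
      · exact absurd hw1 (by omega)
      · exact absurd hle (by omega)
      · exact absurd hw1 (by omega)
      · exact Or.inr (Or.inr (Or.inr (Or.inr (Or.inl (by omega)))))
    · rcases hcq with ⟨hw1, hd1⟩ | ⟨hw1, hd1⟩ | ⟨hw1, hd1⟩ |
          ⟨j', t1', t2', hj', hd1, ht1', ht2', hw1⟩
      · exact Or.inr (Or.inr (Or.inl (by omega)))
      · exact Or.inr (Or.inl (by omega))
      · by_cases h0 : a2 = 0
        · exact Or.inl (by omega)
        · exact Or.inr (Or.inr (Or.inr (Or.inr (Or.inr (by omega)))))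
      · exact absurd hle (by omega)
  · intro h
    rcases h with ⟨h1, h2, h3⟩ | ⟨h1, h2, h3⟩ | ⟨h1, h3⟩ | ⟨h1, h3⟩ | ⟨h1, h2, h3⟩ | ⟨h1, h3⟩
    · -- {m} : a1 = a2 = 0
      refine ⟨by omega, by omega, 0, 2, ?_, ?_, by omega⟩
      · right; right; right
        exact ⟨0, 1, 1, by omega, rfl, Or.inl (by omega), Or.inl (by omega), by omega⟩
      · right; right; left; exact ⟨by omega, rfl⟩
    · -- {m+1}
      refine ⟨by omega, by omega, 0, 1, ?_, ?_, by omega⟩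
      · right; right; right
        exact ⟨0, 1, 0, by omega, rfl, Or.inl (by omega), Or.inr (by omega), by omega⟩
      · right; left; exact ⟨by omega, rfl⟩
    · -- {m+2}
      refine ⟨by omega, by omega, 0, 0, ?_, ?_, by omega⟩
      · right; right; right
        exact ⟨0, 0, 0, by omega, rfl, Or.inr (by omega), Or.inr (by omega), by omega⟩
      · left; exact ⟨by omega, rfl⟩
    · -- {m+2-a1}
      refine ⟨by omega, by omega, 1, a1 - 1, ?_, ?_, by omega⟩
      · right; left; exact ⟨by omega, rfl⟩
      · right; right; right
        exact ⟨a1 - 1, 0, 0, by omega, rfl, Or.inr (by omega), Or.inr (by omega), by omega⟩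
    · -- {m+1-a2}
      refine ⟨by omega, by omega, 2, a2 - 1, ?_, ?_, by omega⟩
      · right; right; left; exact ⟨by omega, rfl⟩
      · right; right; right
        exact ⟨a2 - 1, 1, 0, by omega, rfl, Or.inl (by omega), Or.inr (by omega), by omega⟩
    · -- {m-1} : a2 = 1
      refine ⟨by omega, by omega, 1, 2, ?_, ?_, by omega⟩
      · right; right; right
        exact ⟨1, 1, 1, by omega, rfl, Or.inl (by omega), Or.inl (by omega), by omega⟩
      · right; right; left; exact ⟨by omega, rfl⟩
lemma D_regime (m a1 a2 : ℕ) (hm : 4 ≤ m) (hv : Valid m a1 a2) :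
    (a1 = 0 ∧ a2 = 0 ∧ D m a1 a2 = {m}) ∨
    (a1 = 0 ∧ a2 = 1 ∧ D m a1 a2 = {m - 1, m + 1}) ∨
    (a1 = 0 ∧ 3 ≤ a2 ∧ D m a1 a2 = {m + 1 - a2, m + 1}) ∨
    (3 ≤ a1 ∧ a1 = a2 ∧ D m a1 a2 = {m + 2 - a1, m + 2}) ∨
    (2 ≤ a1 ∧ a1 < a2 ∧ 3 ≤ a2 ∧ D m a1 a2 = {m + 1 - a2, m + 2 - a1, m + 2}) := by
  obtain ⟨ha12, ha2m, ha1, ha2⟩ := hv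
  by_cases h1 : a1 = 0
  · by_cases h2 : a2 = 0
    · refine Or.inl ⟨h1, h2, ?_⟩
      ext i
      simp only [D, Set.mem_setOf_eq, Set.mem_singleton_iff, true_and, and_true, true_or, or_true, true_iff, iff_true]
      omega
    · by_cases h3 : a2 = 1
      · refine Or.inr (Or.inl ⟨h1, h3, ?_⟩)
        ext i
        simp only [D, Set.mem_setOf_eq, Set.mem_insert_iff, Set.mem_singleton_iff, true_and, and_true, true_or, or_true, true_iff, iff_true]
        omega
      · refine Or.inr (Or.inr (Or.inl ⟨h1, by omega, ?_⟩))
        ext i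
        simp only [D, Set.mem_setOf_eq, Set.mem_insert_iff, Set.mem_singleton_iff, true_and, and_true, true_or, or_true, true_iff, iff_true]
        omega
  · by_cases h4 : a1 = a2
    · refine Or.inr (Or.inr (Or.inr (Or.inl ⟨by omega, h4, ?_⟩)))
      ext i
      simp only [D, Set.mem_setOf_eq, Set.mem_insert_iff, Set.mem_singleton_iff, true_and, and_true, true_or, or_true, true_iff, iff_true]
      omega
    · refine Or.inr (Or.inr (Or.inr (Or.inr ⟨by omega, by omega, by omega, ?_⟩)))
      ext i
      simp only [D, Set.mem_setOf_eq, Set.mem_insert_iff, Set.mem_singleton_iff, true_and, and_true, true_or, or_true, true_iff, iff_true]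
      omega

lemma isSCT_iff_s14 (m : ℕ) (hm : 4 ≤ m) (T : (ℕ × ℕ) → ℕ) :
    IsSCT [m, 3] T ↔ ∃ a1 a2, Valid m a1 a2 ∧ T = canonT m a1 a2 := by
  constructor
  · rintro ⟨U, hchain, rfl⟩
    obtain ⟨-, -, a, hcond, rfl⟩ := (sct_classify hchain).2.2 m 3 rfl
    refine ⟨a 1, a 2, ?_, ?_⟩
    · refine ⟨cond_mono hcond (by omega) (by omega), hcond.2.2.1 2 (by omega), ?_, ?_⟩
      · intro h
        exact hcond.2.2.2 1 (by omega) (by omega) h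
      · intro h
        exact hcond.2.2.2 2 (by omega) (by omega) h
    · have hU : mkU m 3 a = canonU m (a 1) (a 2) := by
        apply mkU_congr
        intro c hc
        interval_cases c <;> simp [canonA, hcond.1]
      rw [hU]
      funext c
      simp only [canonT, List.sum_cons, List.sum_nil]
      by_cases h : canonU m (a 1) (a 2) c = 0 <;> simp [h] <;> omega
  · rintro ⟨a1, a2, hv, rfl⟩
    obtain ⟨ha12, ha2m, ha1, ha2⟩ := hv
    refine ⟨canonU m a1 a2, chain_mk m 3 (canonA a1 a2) (by omega) (by omega) ?_, ?_⟩
    · refine ⟨rfl, ?_, ?_, ?_⟩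
      · intro c hc
        rcases (by omega : c = 0 ∨ c = 1) with rfl | rfl <;> simp [canonA] <;> omega
      · intro c hc
        interval_cases c <;> simp [canonA] <;> omega
      · intro c hc
        interval_cases c <;> simp [canonA] <;> omega
    · funext c
      simp only [canonT, List.sum_cons, List.sum_nil]
      by_cases h : canonU m a1 a2 c = 0 <;> simp [h] <;> omega


set_option maxHeartbeats 1600000 in
/-- For `n ≥ 7`, the map `T ↦ des_c(T)` is a bijection from the set of
standard composition tableaux of shape `(n-3, 3)` onto the union of
`{{n-3}}`, `{{n-4, n-2}}`, `{{i, n-2} : 1 ≤ i ≤ n-5}`,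
`{{i, n-1} : 2 ≤ i ≤ n-4}`, and
`{{i, j, n-1} : i, j ∈ [n-3], i < j, j ≠ i+1}`. -/
theorem qs_n_minus_three_three_descents_bijection (n : ℕ) (hn : 7 ≤ n) :
    Function.Injective (fun T : {T // IsSCT [n - 3, 3] T} => desC T.1) ∧
    Set.range (fun T : {T // IsSCT [n - 3, 3] T} => desC T.1) =
      {S : Set ℕ | S = {n - 3} ∨ S = {n - 4, n - 2} ∨
        (∃ i, 1 ≤ i ∧ i ≤ n - 5 ∧ S = {i, n - 2}) ∨
        (∃ i, 2 ≤ i ∧ i ≤ n - 4 ∧ S = {i, n - 1}) ∨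
        (∃ i j, 1 ≤ i ∧ i < j ∧ j ≤ n - 3 ∧ j ≠ i + 1 ∧
          S = {i, j, n - 1})} := by

  have hm4 : 4 ≤ n - 3 := by omega
  constructor
  · rintro ⟨T, hT⟩ ⟨T', hT'⟩ h
    simp only at h
    obtain ⟨a1, a2, hv, rfl⟩ := (isSCT_iff_s14 (n - 3) hm4 T).mp hT
    obtain ⟨b1, b2, hw, rfl⟩ := (isSCT_iff_s14 (n - 3) hm4 T').mp hT'
    rw [desC_canon (n - 3) a1 a2 hm4 hv, desC_canon (n - 3) b1 b2 hm4 hw] at h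
    suffices hs : a1 = b1 ∧ a2 = b2 by
      obtain ⟨rfl, rfl⟩ := hs
      rfl
    obtain ⟨ha12, ha2m, ha1, ha2⟩ := hv
    obtain ⟨hb12, hb2m, hb1, hb2⟩ := hw
    rcases D_regime (n - 3) a1 a2 hm4 ⟨ha12, ha2m, ha1, ha2⟩ with
        ⟨h1, h2, hD⟩ | ⟨h1, h2, hD⟩ | ⟨h1, h2, hD⟩ | ⟨h1, h2, hD⟩ | ⟨h1, h2, h3, hD⟩ <;>
      rcases D_regime (n - 3) b1 b2 hm4 ⟨hb12, hb2m, hb1, hb2⟩ with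
        ⟨k1, k2, kD⟩ | ⟨k1, k2, kD⟩ | ⟨k1, k2, kD⟩ | ⟨k1, k2, kD⟩ | ⟨k1, k2, k3, kD⟩ <;>
      rw [hD, kD] at h <;>
      [skip; skip; skip; skip; skip; skip; skip; skip; skip; skip; skip; skip; skip;
        skip; skip; skip; skip; skip; skip; skip; skip; skip; skip; skip; skip] <;>
      · have e := Set.ext_iff.mp h
        have g1 := e (n - 3 - 1)
        have g2 := e (n - 3)
        have g3 := e (n - 3 + 1)
        have g4 := e (n - 3 + 2)
        have g5 := e (n - 3 + 1 - a2)
        have g6 := e (n - 3 + 2 - a1)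
        have g7 := e (n - 3 + 1 - b2)
        have g8 := e (n - 3 + 2 - b1)
        simp only [Set.mem_insert_iff, Set.mem_singleton_iff, true_and, and_true, true_or,
          or_true, true_iff, iff_true] at g1 g2 g3 g4 g5 g6 g7 g8
        constructor <;> omega
  · ext S
    simp only [Set.mem_range, Set.mem_setOf_eq]
    constructor
    · rintro ⟨⟨T, hT⟩, rfl⟩
      simp only
      obtain ⟨a1, a2, hv, rfl⟩ := (isSCT_iff_s14 (n - 3) hm4 T).mp hT
      rw [desC_canon (n - 3) a1 a2 hm4 hv]
      obtain ⟨ha12, ha2m, ha1, ha2⟩ := hv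
      rcases D_regime (n - 3) a1 a2 hm4 ⟨ha12, ha2m, ha1, ha2⟩ with
          ⟨h1, h2, hD⟩ | ⟨h1, h2, hD⟩ | ⟨h1, h2, hD⟩ | ⟨h1, h2, hD⟩ | ⟨h1, h2, h3, hD⟩
      · left
        rw [hD]
      · right; left
        rw [hD, show n - 3 - 1 = n - 4 by omega, show n - 3 + 1 = n - 2 by omega]
      · right; right; left
        refine ⟨n - 3 + 1 - a2, by omega, by omega, ?_⟩
        rw [hD, show n - 3 + 1 = n - 2 by omega]
      · right; right; right; left
        refine ⟨n - 3 + 2 - a1, by omega, by omega, ?_⟩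
        rw [hD, show n - 3 + 2 = n - 1 by omega]
      · right; right; right; right
        refine ⟨n - 3 + 1 - a2, n - 3 + 2 - a1, by omega, by omega, by omega, by omega, ?_⟩
        rw [hD, show n - 3 + 2 = n - 1 by omega]
    · have mk : ∀ a1 a2, Valid (n - 3) a1 a2 → ∀ S : Set ℕ,
          desC (canonT (n - 3) a1 a2) = S →
          ∃ T : {T // IsSCT [n - 3, 3] T}, desC T.1 = S := by
        intro a1 a2 hv S hS
        exact ⟨⟨canonT (n - 3) a1 a2, (isSCT_iff_s14 (n - 3) hm4 _).mpr ⟨a1, a2, hv, rfl⟩⟩, hS⟩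
      rintro (rfl | rfl | ⟨i, hi1, hi2, rfl⟩ | ⟨i, hi1, hi2, rfl⟩ |
          ⟨i, j, hi1, hij, hj, hji, rfl⟩)
      · refine mk 0 0 ⟨by omega, by omega, by omega, by omega⟩ _ ?_
        rw [desC_canon (n - 3) 0 0 hm4 ⟨by omega, by omega, by omega, by omega⟩]
        rcases D_regime (n - 3) 0 0 hm4 ⟨by omega, by omega, by omega, by omega⟩ with
            ⟨h1, h2, hD⟩ | ⟨h1, h2, hD⟩ | ⟨h1, h2, hD⟩ | ⟨h1, h2, hD⟩ | ⟨h1, h2, h3, hD⟩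
        · exact hD
        · exact absurd h2 (by omega)
        · exact absurd h2 (by omega)
        · exact absurd h1 (by omega)
        · exact absurd h1 (by omega)
      · refine mk 0 1 ⟨by omega, by omega, by omega, by omega⟩ _ ?_
        rw [desC_canon (n - 3) 0 1 hm4 ⟨by omega, by omega, by omega, by omega⟩]
        rcases D_regime (n - 3) 0 1 hm4 ⟨by omega, by omega, by omega, by omega⟩ with
            ⟨h1, h2, hD⟩ | ⟨h1, h2, hD⟩ | ⟨h1, h2, hD⟩ | ⟨h1, h2, hD⟩ | ⟨h1, h2, h3, hD⟩
        · exact absurd h2 (by omega)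
        · rw [hD, show n - 3 - 1 = n - 4 by omega, show n - 3 + 1 = n - 2 by omega]
        · exact absurd h2 (by omega)
        · exact absurd h1 (by omega)
        · exact absurd h1 (by omega)
      · refine mk 0 (n - 2 - i) ⟨by omega, by omega, by omega, by omega⟩ _ ?_
        rw [desC_canon (n - 3) 0 (n - 2 - i) hm4 ⟨by omega, by omega, by omega, by omega⟩]
        rcases D_regime (n - 3) 0 (n - 2 - i) hm4 ⟨by omega, by omega, by omega, by omega⟩ with
            ⟨h1, h2, hD⟩ | ⟨h1, h2, hD⟩ | ⟨h1, h2, hD⟩ | ⟨h1, h2, hD⟩ | ⟨h1, h2, h3, hD⟩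
        · exact absurd h2 (by omega)
        · exact absurd h2 (by omega)
        · rw [hD, show n - 3 + 1 - (n - 2 - i) = i by omega,
            show n - 3 + 1 = n - 2 by omega]
        · exact absurd h1 (by omega)
        · exact absurd h1 (by omega)
      · refine mk (n - 1 - i) (n - 1 - i) ⟨by omega, by omega, by omega, by omega⟩ _ ?_
        rw [desC_canon (n - 3) (n - 1 - i) (n - 1 - i) hm4
          ⟨by omega, by omega, by omega, by omega⟩]
        rcases D_regime (n - 3) (n - 1 - i) (n - 1 - i) hm4
            ⟨by omega, by omega, by omega, by omega⟩ with
            ⟨h1, h2, hD⟩ | ⟨h1, h2, hD⟩ | ⟨h1, h2, hD⟩ | ⟨h1, h2, hD⟩ | ⟨h1, h2, h3, hD⟩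
        · exact absurd h1 (by omega)
        · exact absurd h1 (by omega)
        · exact absurd h1 (by omega)
        · rw [hD, show n - 3 + 2 - (n - 1 - i) = i by omega,
            show n - 3 + 2 = n - 1 by omega]
        · exact absurd h2 (by omega)
      · refine mk (n - 1 - j) (n - 2 - i) ⟨by omega, by omega, by omega, by omega⟩ _ ?_
        rw [desC_canon (n - 3) (n - 1 - j) (n - 2 - i) hm4
          ⟨by omega, by omega, by omega, by omega⟩]
        rcases D_regime (n - 3) (n - 1 - j) (n - 2 - i) hm4
            ⟨by omega, by omega, by omega, by omega⟩ with
            ⟨h1, h2, hD⟩ | ⟨h1, h2, hD⟩ | ⟨h1, h2, hD⟩ | ⟨h1, h2, hD⟩ | ⟨h1, h2, h3, hD⟩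
        · exact absurd h1 (by omega)
        · exact absurd h1 (by omega)
        · exact absurd h1 (by omega)
        · exact absurd h2 (by omega)
        · rw [hD, show n - 3 + 1 - (n - 2 - i) = i by omega,
            show n - 3 + 2 - (n - 1 - j) = j by omega, show n - 3 + 2 = n - 1 by omega]
end

section
/- Let n ≥ 9 and let m satisfy n−m > m ≥ 4. Then there exist two distinct standard composition tableaux of shape (n−m, m) both having descent set {2, 5, n−m+3}; hence S_{(n−m,m)} is not F-multiplicity free. -/
theorem chain_congr {α : List ℕ} {U U' : (ℕ × ℕ) → ℕ} (h : SCTChain α U)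
    (he : ∀ c, U c = U' c) : SCTChain α U' := funext he ▸ h

theorem chain_congr' {α α' : List ℕ} {U U' : (ℕ × ℕ) → ℕ} (h : SCTChain α U)
    (ha : α = α') (he : ∀ c, U c = U' c) : SCTChain α' U' := ha ▸ funext he ▸ h

theorem chain_row (a : ℕ) : SCTChain [a + 1]
    (fun c => if c.1 = 0 ∧ c.2 ≤ a then c.2 + 1 else 0) := by
  induction a with
  | zero =>
    apply chain_congr SCTChain.nil.prepend
    rintro ⟨p1, p2⟩
    simp only [Prod.mk.injEq, List.sum_nil]
    split_ifs <;> omega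
  | succ a ih =>
    have h := ih.grow 0 (by simp) (by omega)
    have hs : ([a + 1]).set 0 (([a + 1]).getD 0 0 + 1) = [a + 1 + 1] := by simp
    rw [hs] at h
    apply chain_congr h
    rintro ⟨p1, p2⟩
    simp only [Prod.mk.injEq, List.sum_cons, List.sum_nil, List.getD_cons_zero,
      List.getD_cons_succ]
    split_ifs <;> omega

theorem chain_tworow (a t : ℕ) : SCTChain [t + 1, a + 1]
    (fun c => if c.1 = 0 ∧ c.2 ≤ t then a + 2 + c.2
      else if c.1 = 1 ∧ c.2 ≤ a then c.2 + 1 else 0) := by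
  induction t with
  | zero =>
    apply chain_congr (chain_row a).prepend
    rintro ⟨p1, p2⟩
    simp only [Prod.mk.injEq, List.sum_cons, List.sum_nil]
    split_ifs <;> omega
  | succ t ih =>
    have h := ih.grow 0 (by simp) (by omega)
    have hs : ([t + 1, a + 1]).set 0 (([t + 1, a + 1]).getD 0 0 + 1) = [t + 1 + 1, a + 1] := by
      simp
    rw [hs] at h
    apply chain_congr h
    rintro ⟨p1, p2⟩
    simp only [Prod.mk.injEq, List.sum_cons, List.sum_nil, List.getD_cons_zero,
      List.getD_cons_succ]
    split_ifs <;> omega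

/-- The chain-labelling of the first tableau, of shape `[b+d+5, b+4]`. -/
def U1fun (b d : ℕ) : ℕ × ℕ → ℕ := fun c =>
  if c.1 = 0 then
    (if c.2 ≤ b + d + 2 then b + 2 + c.2
     else if c.2 = b + d + 3 then 2 * b + d + 7
     else if c.2 = b + d + 4 then 2 * b + d + 9 else 0)
  else if c.1 = 1 then
    (if c.2 ≤ b then c.2 + 1
     else if c.2 = b + 1 then 2 * b + d + 5
     else if c.2 = b + 2 then 2 * b + d + 6
     else if c.2 = b + 3 then 2 * b + d + 8 else 0)
  else 0

/-- The chain-labelling of the second tableau, of shape `[b+d+5, b+4]`. -/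
def U2fun (b d : ℕ) : ℕ × ℕ → ℕ := fun c =>
  if c.1 = 0 then
    (if c.2 ≤ b + d + 2 then b + 2 + c.2
     else if c.2 = b + d + 3 then 2 * b + d + 6
     else if c.2 = b + d + 4 then 2 * b + d + 7 else 0)
  else if c.1 = 1 then
    (if c.2 ≤ b then c.2 + 1
     else if c.2 = b + 1 then 2 * b + d + 5
     else if c.2 = b + 2 then 2 * b + d + 8
     else if c.2 = b + 3 then 2 * b + d + 9 else 0)
  else 0

set_option maxHeartbeats 1000000 in
theorem chain1 (b d : ℕ) : SCTChain [b + d + 5, b + 4] (U1fun b d) := by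
  have h0 := chain_tworow b (b + d + 2)
  have h1 := h0.grow 1 (by norm_num)
    (by intro j hj; have hz : j = 0 := (by omega); subst hz
        show b + d + 2 + 1 ≠ b + 1; omega)
  simp only [List.set_cons_succ, List.set_cons_zero, List.getD_cons_zero, List.getD_cons_succ,
    List.sum_cons, List.sum_nil] at h1
  have h2 := h1.grow 1 (by norm_num)
    (by intro j hj; have hz : j = 0 := (by omega); subst hz
        show b + d + 2 + 1 ≠ b + 1 + 1; omega)
  simp only [List.set_cons_succ, List.set_cons_zero, List.getD_cons_zero, List.getD_cons_succ,
    List.sum_cons, List.sum_nil] at h2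
  have h3 := h2.grow 0 (by norm_num) (by omega)
  simp only [List.set_cons_succ, List.set_cons_zero, List.getD_cons_zero, List.getD_cons_succ,
    List.sum_cons, List.sum_nil] at h3
  have h4 := h3.grow 1 (by norm_num)
    (by intro j hj; have hz : j = 0 := (by omega); subst hz
        show b + d + 2 + 1 + 1 ≠ b + 1 + 1 + 1; omega)
  simp only [List.set_cons_succ, List.set_cons_zero, List.getD_cons_zero, List.getD_cons_succ,
    List.sum_cons, List.sum_nil] at h4
  have h5 := h4.grow 0 (by norm_num) (by omega)
  simp only [List.set_cons_succ, List.set_cons_zero, List.getD_cons_zero, List.getD_cons_succ,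
    List.sum_cons, List.sum_nil] at h5
  apply chain_congr' h5 (by norm_num)
  rintro ⟨p1, p2⟩
  simp only [U1fun, Prod.mk.injEq]
  split_ifs <;> omega

set_option maxHeartbeats 1000000 in
theorem chain2 (b d : ℕ) : SCTChain [b + d + 5, b + 4] (U2fun b d) := by
  have h0 := chain_tworow b (b + d + 2)
  have h1 := h0.grow 1 (by norm_num)
    (by intro j hj; have hz : j = 0 := (by omega); subst hz
        show b + d + 2 + 1 ≠ b + 1; omega)
  simp only [List.set_cons_succ, List.set_cons_zero, List.getD_cons_zero, List.getD_cons_succ,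
    List.sum_cons, List.sum_nil] at h1
  have h2 := h1.grow 0 (by norm_num) (by omega)
  simp only [List.set_cons_succ, List.set_cons_zero, List.getD_cons_zero, List.getD_cons_succ,
    List.sum_cons, List.sum_nil] at h2
  have h3 := h2.grow 0 (by norm_num) (by omega)
  simp only [List.set_cons_succ, List.set_cons_zero, List.getD_cons_zero, List.getD_cons_succ,
    List.sum_cons, List.sum_nil] at h3
  have h4 := h3.grow 1 (by norm_num)
    (by intro j hj; have hz : j = 0 := (by omega); subst hz
        show b + d + 2 + 1 + 1 + 1 ≠ b + 1 + 1; omega)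
  simp only [List.set_cons_succ, List.set_cons_zero, List.getD_cons_zero, List.getD_cons_succ,
    List.sum_cons, List.sum_nil] at h4
  have h5 := h4.grow 1 (by norm_num)
    (by intro j hj; have hz : j = 0 := (by omega); subst hz
        show b + d + 2 + 1 + 1 + 1 ≠ b + 1 + 1 + 1; omega)
  simp only [List.set_cons_succ, List.set_cons_zero, List.getD_cons_zero, List.getD_cons_succ,
    List.sum_cons, List.sum_nil] at h5
  apply chain_congr' h5 (by norm_num)
  rintro ⟨p1, p2⟩
  simp only [U2fun, Prod.mk.injEq]
  split_ifs <;> omega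

def T1def (b d : ℕ) : ℕ × ℕ → ℕ := fun c =>
  if U1fun b d c = 0 then 0 else 2 * b + d + 10 - U1fun b d c


def T2def (b d : ℕ) : ℕ × ℕ → ℕ := fun c =>
  if U2fun b d c = 0 then 0 else 2 * b + d + 10 - U2fun b d c

theorem U1_spec (b d p1 p2 v : ℕ) (h : U1fun b d (p1, p2) = v) (hv : 0 < v) :
    (p1 = 0 ∧ p2 ≤ b + d + 2 ∧ v = b + 2 + p2) ∨
    (p1 = 0 ∧ p2 = b + d + 3 ∧ v = 2 * b + d + 7) ∨
    (p1 = 0 ∧ p2 = b + d + 4 ∧ v = 2 * b + d + 9) ∨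
    (p1 = 1 ∧ p2 ≤ b ∧ v = p2 + 1) ∨
    (p1 = 1 ∧ p2 = b + 1 ∧ v = 2 * b + d + 5) ∨
    (p1 = 1 ∧ p2 = b + 2 ∧ v = 2 * b + d + 6) ∨
    (p1 = 1 ∧ p2 = b + 3 ∧ v = 2 * b + d + 8) := by
  simp only [U1fun] at h
  split_ifs at h <;> omega

theorem T1_spec (b d p1 p2 v : ℕ) (h : T1def b d (p1, p2) = v) (hv : 0 < v) :
    (p1 = 0 ∧ p2 ≤ b + d + 2 ∧ v = b + d + 8 - p2) ∨
    (p1 = 0 ∧ p2 = b + d + 3 ∧ v = 3) ∨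
    (p1 = 0 ∧ p2 = b + d + 4 ∧ v = 1) ∨
    (p1 = 1 ∧ p2 ≤ b ∧ v = 2 * b + d + 9 - p2) ∨
    (p1 = 1 ∧ p2 = b + 1 ∧ v = 5) ∨
    (p1 = 1 ∧ p2 = b + 2 ∧ v = 4) ∨
    (p1 = 1 ∧ p2 = b + 3 ∧ v = 2) := by
  obtain ⟨u, hu⟩ : ∃ u, U1fun b d (p1, p2) = u := ⟨_, rfl⟩
  simp only [T1def, hu] at h
  have hu0 : u ≠ 0 := by intro h0; subst h0; simp only [if_pos] at h; omega
  rw [if_neg hu0] at h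
  have hs := U1_spec b d p1 p2 u hu (Nat.pos_of_ne_zero hu0)
  rcases hs with ⟨h1, h2, h3⟩ | ⟨h1, h2, h3⟩ | ⟨h1, h2, h3⟩ | ⟨h1, h2, h3⟩ |
    ⟨h1, h2, h3⟩ | ⟨h1, h2, h3⟩ | ⟨h1, h2, h3⟩
  · exact Or.inl ⟨h1, h2, by omega⟩
  · exact Or.inr (Or.inl ⟨h1, h2, by omega⟩)
  · exact Or.inr (Or.inr (Or.inl ⟨h1, h2, by omega⟩))
  · exact Or.inr (Or.inr (Or.inr (Or.inl ⟨h1, h2, by omega⟩)))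
  · exact Or.inr (Or.inr (Or.inr (Or.inr (Or.inl ⟨h1, h2, by omega⟩))))
  · exact Or.inr (Or.inr (Or.inr (Or.inr (Or.inr (Or.inl ⟨h1, h2, by omega⟩)))))
  · exact Or.inr (Or.inr (Or.inr (Or.inr (Or.inr (Or.inr ⟨h1, h2, by omega⟩)))))

theorem U2_spec (b d p1 p2 v : ℕ) (h : U2fun b d (p1, p2) = v) (hv : 0 < v) :
    (p1 = 0 ∧ p2 ≤ b + d + 2 ∧ v = b + 2 + p2) ∨
    (p1 = 0 ∧ p2 = b + d + 3 ∧ v = 2 * b + d + 6) ∨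
    (p1 = 0 ∧ p2 = b + d + 4 ∧ v = 2 * b + d + 7) ∨
    (p1 = 1 ∧ p2 ≤ b ∧ v = p2 + 1) ∨
    (p1 = 1 ∧ p2 = b + 1 ∧ v = 2 * b + d + 5) ∨
    (p1 = 1 ∧ p2 = b + 2 ∧ v = 2 * b + d + 8) ∨
    (p1 = 1 ∧ p2 = b + 3 ∧ v = 2 * b + d + 9) := by
  simp only [U2fun] at h
  split_ifs at h <;> omega

theorem T2_spec (b d p1 p2 v : ℕ) (h : T2def b d (p1, p2) = v) (hv : 0 < v) :
    (p1 = 0 ∧ p2 ≤ b + d + 2 ∧ v = b + d + 8 - p2) ∨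
    (p1 = 0 ∧ p2 = b + d + 3 ∧ v = 4) ∨
    (p1 = 0 ∧ p2 = b + d + 4 ∧ v = 3) ∨
    (p1 = 1 ∧ p2 ≤ b ∧ v = 2 * b + d + 9 - p2) ∨
    (p1 = 1 ∧ p2 = b + 1 ∧ v = 5) ∨
    (p1 = 1 ∧ p2 = b + 2 ∧ v = 2) ∨
    (p1 = 1 ∧ p2 = b + 3 ∧ v = 1) := by
  obtain ⟨u, hu⟩ : ∃ u, U2fun b d (p1, p2) = u := ⟨_, rfl⟩
  simp only [T2def, hu] at h
  have hu0 : u ≠ 0 := by intro h0; subst h0; simp only [if_pos] at h; omega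
  rw [if_neg hu0] at h
  have hs := U2_spec b d p1 p2 u hu (Nat.pos_of_ne_zero hu0)
  rcases hs with ⟨h1, h2, h3⟩ | ⟨h1, h2, h3⟩ | ⟨h1, h2, h3⟩ | ⟨h1, h2, h3⟩ |
    ⟨h1, h2, h3⟩ | ⟨h1, h2, h3⟩ | ⟨h1, h2, h3⟩
  · exact Or.inl ⟨h1, h2, by omega⟩
  · exact Or.inr (Or.inl ⟨h1, h2, by omega⟩)
  · exact Or.inr (Or.inr (Or.inl ⟨h1, h2, by omega⟩))
  · exact Or.inr (Or.inr (Or.inr (Or.inl ⟨h1, h2, by omega⟩)))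
  · exact Or.inr (Or.inr (Or.inr (Or.inr (Or.inl ⟨h1, h2, by omega⟩))))
  · exact Or.inr (Or.inr (Or.inr (Or.inr (Or.inr (Or.inl ⟨h1, h2, by omega⟩)))))
  · exact Or.inr (Or.inr (Or.inr (Or.inr (Or.inr (Or.inr ⟨h1, h2, by omega⟩)))))

theorem des1 (b d : ℕ) : desC (T1def b d) = {2, 5, b + d + 8} := by
  ext i
  simp only [desC, Set.mem_setOf_eq, Set.mem_insert_iff, Set.mem_singleton_iff]
  constructor
  · rintro ⟨hi, ⟨p1, p2⟩, ⟨q1, q2⟩, hp, hq, hle⟩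
    simp only at hle
    have s1 := T1_spec b d p1 p2 i hp hi
    have s2 := T1_spec b d q1 q2 (i + 1) hq (by omega)
    rcases s1 with ⟨h1, h2, h3⟩ | ⟨h1, h2, h3⟩ | ⟨h1, h2, h3⟩ | ⟨h1, h2, h3⟩ |
      ⟨h1, h2, h3⟩ | ⟨h1, h2, h3⟩ | ⟨h1, h2, h3⟩ <;>
    rcases s2 with ⟨g1, g2, g3⟩ | ⟨g1, g2, g3⟩ | ⟨g1, g2, g3⟩ | ⟨g1, g2, g3⟩ |
      ⟨g1, g2, g3⟩ | ⟨g1, g2, g3⟩ | ⟨g1, g2, g3⟩ <;> omega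
  · rintro (rfl | rfl | rfl)
    · exact ⟨by omega, (1, b + 3), (0, b + d + 3), by simp only [T1def, U1fun]; split_ifs <;> first | omega | exact ‹False›.elim,
        by simp only [T1def, U1fun]; split_ifs <;> first | omega | exact ‹False›.elim, by show b + 3 ≤ b + d + 3; omega⟩
    · exact ⟨by omega, (1, b + 1), (0, b + d + 2), by simp only [T1def, U1fun]; split_ifs <;> first | omega | exact ‹False›.elim,
        by simp only [T1def, U1fun]; split_ifs <;> first | omega | exact ‹False›.elim, by show b + 1 ≤ b + d + 2; omega⟩
    · exact ⟨by omega, (0, 0), (1, b), by simp only [T1def, U1fun]; split_ifs <;> first | omega | exact ‹False›.elim,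
        by simp only [T1def, U1fun]; split_ifs <;> first | omega | exact ‹False›.elim, by show 0 ≤ b; omega⟩

theorem des2 (b d : ℕ) : desC (T2def b d) = {2, 5, b + d + 8} := by
  ext i
  simp only [desC, Set.mem_setOf_eq, Set.mem_insert_iff, Set.mem_singleton_iff]
  constructor
  · rintro ⟨hi, ⟨p1, p2⟩, ⟨q1, q2⟩, hp, hq, hle⟩
    simp only at hle
    have s1 := T2_spec b d p1 p2 i hp hi
    have s2 := T2_spec b d q1 q2 (i + 1) hq (by omega)
    rcases s1 with ⟨h1, h2, h3⟩ | ⟨h1, h2, h3⟩ | ⟨h1, h2, h3⟩ | ⟨h1, h2, h3⟩ |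
      ⟨h1, h2, h3⟩ | ⟨h1, h2, h3⟩ | ⟨h1, h2, h3⟩ <;>
    rcases s2 with ⟨g1, g2, g3⟩ | ⟨g1, g2, g3⟩ | ⟨g1, g2, g3⟩ | ⟨g1, g2, g3⟩ |
      ⟨g1, g2, g3⟩ | ⟨g1, g2, g3⟩ | ⟨g1, g2, g3⟩ <;> omega
  · rintro (rfl | rfl | rfl)
    · exact ⟨by omega, (1, b + 2), (0, b + d + 4), by simp only [T2def, U2fun]; split_ifs <;> first | omega | exact ‹False›.elim,
        by simp only [T2def, U2fun]; split_ifs <;> first | omega | exact ‹False›.elim, by show b + 2 ≤ b + d + 4; omega⟩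
    · exact ⟨by omega, (1, b + 1), (0, b + d + 2), by simp only [T2def, U2fun]; split_ifs <;> first | omega | exact ‹False›.elim,
        by simp only [T2def, U2fun]; split_ifs <;> first | omega | exact ‹False›.elim, by show b + 1 ≤ b + d + 2; omega⟩
    · exact ⟨by omega, (0, 0), (1, b), by simp only [T2def, U2fun]; split_ifs <;> first | omega | exact ‹False›.elim,
        by simp only [T2def, U2fun]; split_ifs <;> first | omega | exact ‹False›.elim, by show 0 ≤ b; omega⟩

theorem isSCT1 (b d : ℕ) : IsSCT [b + d + 5, b + 4] (T1def b d) := by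
  refine ⟨U1fun b d, chain1 b d, funext fun c => ?_⟩
  have hsum : ([b + d + 5, b + 4] : List ℕ).sum + 1 = 2 * b + d + 10 := by
    simp only [List.sum_cons, List.sum_nil]; omega
  rw [hsum]
  rfl

theorem isSCT2 (b d : ℕ) : IsSCT [b + d + 5, b + 4] (T2def b d) := by
  refine ⟨U2fun b d, chain2 b d, funext fun c => ?_⟩
  have hsum : ([b + d + 5, b + 4] : List ℕ).sum + 1 = 2 * b + d + 10 := by
    simp only [List.sum_cons, List.sum_nil]; omega
  rw [hsum]
  rfl

theorem Tne (b d : ℕ) : T1def b d ≠ T2def b d := by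
  intro h
  have h1 : T1def b d (0, b + d + 3) = 3 := by
    simp only [T1def, U1fun]; split_ifs <;> first | omega | exact ‹False›.elim
  have h2 : T2def b d (0, b + d + 3) = 4 := by
    simp only [T2def, U2fun]; split_ifs <;> first | omega | exact ‹False›.elim
  rw [h] at h1
  omega

theorem aux_main (b d : ℕ) :
    (∃ T T', IsSCT [b + d + 5, b + 4] T ∧ IsSCT [b + d + 5, b + 4] T' ∧ T ≠ T' ∧
      desC T = {2, 5, b + d + 8} ∧ desC T' = {2, 5, b + d + 8}) ∧
    ¬ FmfSCT [b + d + 5, b + 4] := by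
  refine ⟨⟨T1def b d, T2def b d, isSCT1 b d, isSCT2 b d, Tne b d, des1 b d, des2 b d⟩, ?_⟩
  intro hf
  exact Tne b d (hf _ _ (isSCT1 b d) (isSCT2 b d) ((des1 b d).trans (des2 b d).symm))

/-- For `n ≥ 9` and `n-m > m ≥ 4` there are two distinct standard
composition tableaux of shape `(n-m, m)` both having descent set
`{2, 5, n-m+3}`; hence `S_{(n-m,m)}` is not F-multiplicity free. -/
theorem qs_nm_m_multiplicity (n m : ℕ) (hn : 9 ≤ n) (hm : 4 ≤ m)
    (hmn : m < n - m) :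
    (∃ T T', IsSCT [n - m, m] T ∧ IsSCT [n - m, m] T' ∧ T ≠ T' ∧
      desC T = {2, 5, n - m + 3} ∧ desC T' = {2, 5, n - m + 3}) ∧
    ¬ FmfSCT [n - m, m] := by
  obtain ⟨b, hb⟩ : ∃ b, m = b + 4 := ⟨m - 4, by omega⟩
  obtain ⟨d, hd⟩ : ∃ d, n - m = b + d + 5 := ⟨n - m - m - 1, by omega⟩
  rw [hd, hb]
  have h8 : b + d + 5 + 3 = b + d + 8 := by omega
  rw [h8]
  exact aux_main b d
end

section
/- Let n ≥ 10 and let m satisfy n−m > m ≥ 4. Then there exist two distinct standard composition tableaux of shape (m, n−m) both having descent set {2, 5, n−m+2}; hence S_{(m,n−m)} is not F-multiplicity free. -/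
theorem sct_cast {β β' : List ℕ} {U U' : (ℕ × ℕ) → ℕ} (h : SCTChain β U)
    (h1 : β = β') (h2 : ∀ c, U c = U' c) : SCTChain β' U' := by
  subst h1; rwa [show U = U' from funext h2] at h

set_option linter.unreachableTactic false in
set_option linter.unusedTactic false in
theorem chain_single : ∀ a : ℕ, SCTChain [a + 1] (fun c => if c.1 = 0 ∧ c.2 ≤ a then c.2 + 1 else 0)
  | 0 => sct_cast SCTChain.nil.prepend rfl (by
      rintro ⟨i, j⟩
      simp only [Prod.mk.injEq, List.sum_nil]
      split_ifs <;> omega)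
  | (a+1) => sct_cast ((chain_single a).grow 0 (by simp) (fun j hj => absurd hj (Nat.not_lt_zero j)))
      (by simp) (by
      rintro ⟨i, j⟩
      simp only [Prod.mk.injEq, List.sum_cons, List.sum_nil, List.getD_cons_zero]
      split_ifs <;> omega)

set_option linter.unreachableTactic false in
set_option linter.unusedTactic false in
theorem grow_top {U : (ℕ × ℕ) → ℕ} (a b : ℕ) (h : SCTChain [a, b] U) :
    ∀ t : ℕ, SCTChain [a + t, b]
      (fun c => if c.1 = 0 ∧ a ≤ c.2 ∧ c.2 < a + t then c.2 + b + 1 else U c)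
  | 0 => sct_cast h rfl (by rintro ⟨i, j⟩; simp only; split_ifs <;> first | omega | rfl)
  | (t+1) => sct_cast ((grow_top a b h t).grow 0 (by simp) (fun j hj => absurd hj (Nat.not_lt_zero j)))
      (by simp; omega) (by
      rintro ⟨i, j⟩
      simp only [Prod.mk.injEq, List.sum_cons, List.sum_nil, List.getD_cons_zero]
      split_ifs <;> first | omega | rfl)

set_option linter.unreachableTactic false in
set_option linter.unusedTactic false in
theorem grow_bot {U : (ℕ × ℕ) → ℕ} (a b : ℕ) (h : SCTChain [a, b] U) :
    ∀ t : ℕ, (∀ s, b ≤ s → s < b + t → a ≠ s) → SCTChain [a, b + t]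
      (fun c => if c.1 = 1 ∧ b ≤ c.2 ∧ c.2 < b + t then a + c.2 + 1 else U c)
  | 0, _ => sct_cast h rfl (by rintro ⟨i, j⟩; simp only; split_ifs <;> first | omega | rfl)
  | (t+1), hab => sct_cast ((grow_bot a b h t (fun s h1 h2 => hab s h1 (by omega))).grow 1 (by simp)
      (by
        intro j hj
        interval_cases j
        simpa using hab (b + t) (by omega) (by omega)))
      (by simp; omega) (by
      rintro ⟨i, j⟩
      simp only [Prod.mk.injEq, List.sum_cons, List.sum_nil, List.getD_cons_zero,
        List.getD_cons_succ]
      split_ifs <;> first | omega | rfl)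

/-! ### The three explicit fillings -/

def UA (m k : ℕ) : ℕ × ℕ → ℕ := fun c =>
  if c.1 = 0 then
    if c.2 + 4 ≤ m then c.2 + m - 1
    else if c.2 + 3 = m then m + k - 4
    else if c.2 + 2 = m then m + k - 1
    else if c.2 + 1 = m then m + k
    else 0
  else if c.1 = 1 then
    if c.2 + 3 ≤ m then c.2 + 1
    else if c.2 + 3 ≤ k then c.2 + m - 2
    else if c.2 + 2 = k then m + k - 3
    else if c.2 + 1 = k then m + k - 2
    else 0
  else 0

def UD (m k : ℕ) : ℕ × ℕ → ℕ := fun c =>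
  if c.1 = 0 then
    if c.2 + 4 ≤ m then c.2 + m - 1
    else if c.2 + 3 = m then m + k - 4
    else if c.2 + 2 = m then m + k - 3
    else if c.2 + 1 = m then m + k - 1
    else 0
  else if c.1 = 1 then
    if c.2 + 3 ≤ m then c.2 + 1
    else if c.2 + 3 ≤ k then c.2 + m - 2
    else if c.2 + 2 = k then m + k - 2
    else if c.2 + 1 = k then m + k
    else 0
  else 0

def UC (m : ℕ) : ℕ × ℕ → ℕ := fun c =>
  if c.1 = 0 then
    if c.2 + 5 ≤ m then c.2 + m - 1
    else if c.2 + 4 = m then 2 * m - 3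
    else if c.2 + 3 = m then 2 * m - 2
    else if c.2 + 2 = m then 2 * m
    else if c.2 + 1 = m then 2 * m + 1
    else 0
  else if c.1 = 1 then
    if c.2 + 3 ≤ m then c.2 + 1
    else if c.2 + 1 ≤ m then c.2 + m - 3
    else if c.2 = m then 2 * m - 1
    else 0
  else 0

set_option maxHeartbeats 1000000 in
theorem chainA (m k : ℕ) (hm : 4 ≤ m) (hk : m + 1 ≤ k) : SCTChain [m, k] (UA m k) := by
  have h1 := sct_cast (chain_single (m - 3)) (show [m - 3 + 1] = [m - 2] by simp; omega)
    (fun c => rfl)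
  have h2 := h1.prepend
  have h3 := sct_cast (grow_top 1 (m - 2) h2 (m - 4))
    (show [1 + (m - 4), m - 2] = [m - 3, m - 2] by simp; omega) (fun c => rfl)
  have h4 := sct_cast (grow_bot (m - 3) (m - 2) h3 (k - m) (by intro s hs1 hs2; omega))
    (show [m - 3, m - 2 + (k - m)] = [m - 3, k - 2] by simp; omega) (fun c => rfl)
  have h5 := sct_cast (grow_top (m - 3) (k - 2) h4 1)
    (show [m - 3 + 1, k - 2] = [m - 2, k - 2] by simp; omega) (fun c => rfl)
  have h6 := sct_cast (grow_bot (m - 2) (k - 2) h5 2 (by intro s hs1 hs2; omega))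
    (show [m - 2, k - 2 + 2] = [m - 2, k] by simp; omega) (fun c => rfl)
  refine sct_cast (grow_top (m - 2) k h6 2)
    (show [m - 2 + 2, k] = [m, k] by simp; omega) ?_
  rintro ⟨i, j⟩
  simp only [UA, Prod.mk.injEq, List.sum_cons, List.sum_nil]
  split_ifs <;> omega

set_option maxHeartbeats 1000000 in
theorem chainD (m k : ℕ) (hm : 4 ≤ m) (hk : m + 2 ≤ k) : SCTChain [m, k] (UD m k) := by
  have h1 := sct_cast (chain_single (m - 3)) (show [m - 3 + 1] = [m - 2] by simp; omega)
    (fun c => rfl)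
  have h2 := h1.prepend
  have h3 := sct_cast (grow_top 1 (m - 2) h2 (m - 4))
    (show [1 + (m - 4), m - 2] = [m - 3, m - 2] by simp; omega) (fun c => rfl)
  have h4 := sct_cast (grow_bot (m - 3) (m - 2) h3 (k - m) (by intro s hs1 hs2; omega))
    (show [m - 3, m - 2 + (k - m)] = [m - 3, k - 2] by simp; omega) (fun c => rfl)
  have h5 := sct_cast (grow_top (m - 3) (k - 2) h4 2)
    (show [m - 3 + 2, k - 2] = [m - 1, k - 2] by simp; omega) (fun c => rfl)
  have h6 := sct_cast (grow_bot (m - 1) (k - 2) h5 1 (by intro s hs1 hs2; omega))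
    (show [m - 1, k - 2 + 1] = [m - 1, k - 1] by simp; omega) (fun c => rfl)
  have h7 := sct_cast (grow_top (m - 1) (k - 1) h6 1)
    (show [m - 1 + 1, k - 1] = [m, k - 1] by simp; omega) (fun c => rfl)
  refine sct_cast (grow_bot m (k - 1) h7 1 (by intro s hs1 hs2; omega))
    (show [m, k - 1 + 1] = [m, k] by simp; omega) ?_
  rintro ⟨i, j⟩
  simp only [UD, Prod.mk.injEq, List.sum_cons, List.sum_nil]
  split_ifs <;> omega

set_option maxHeartbeats 1000000 in
theorem chainC (m : ℕ) (hm : 5 ≤ m) : SCTChain [m, m + 1] (UC m) := by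
  have h1 := sct_cast (chain_single (m - 3)) (show [m - 3 + 1] = [m - 2] by simp; omega)
    (fun c => rfl)
  have h2 := h1.prepend
  have h3 := sct_cast (grow_top 1 (m - 2) h2 (m - 5))
    (show [1 + (m - 5), m - 2] = [m - 4, m - 2] by simp; omega) (fun c => rfl)
  have h4 := sct_cast (grow_bot (m - 4) (m - 2) h3 2 (by intro s hs1 hs2; omega))
    (show [m - 4, m - 2 + 2] = [m - 4, m] by simp; omega) (fun c => rfl)
  have h5 := sct_cast (grow_top (m - 4) m h4 2)
    (show [m - 4 + 2, m] = [m - 2, m] by simp; omega) (fun c => rfl)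
  have h6 := sct_cast (grow_bot (m - 2) m h5 1 (by intro s hs1 hs2; omega))
    (show [m - 2, m + 1] = [m - 2, m + 1] by rfl) (fun c => rfl)
  refine sct_cast (grow_top (m - 2) (m + 1) h6 2)
    (show [m - 2 + 2, m + 1] = [m, m + 1] by simp; omega) ?_
  rintro ⟨i, j⟩
  simp only [UC, Prod.mk.injEq, List.sum_cons, List.sum_nil]
  split_ifs <;> omega

/-! ### Locating values: column descriptions -/

set_option maxHeartbeats 1000000 in
theorem UA_colval (m k : ℕ) (hm : 4 ≤ m) (hk : m + 1 ≤ k) :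
    ∀ v i j : ℕ, UA m k (i, j) = v → v ≠ 0 →
      (1 ≤ v ∧ v + 2 ≤ m ∧ j + 1 = v) ∨
      (m ≤ v + 1 ∧ v + 5 ≤ 2 * m ∧ v = j + m - 1) ∨
      (2 * m ≤ v + 4 ∧ v + 5 ≤ m + k ∧ v = j + m - 2) ∨
      (v + 4 = m + k ∧ j + 3 = m) ∨ (v + 3 = m + k ∧ j + 2 = k) ∨
      (v + 2 = m + k ∧ j + 1 = k) ∨ (v + 1 = m + k ∧ j + 2 = m) ∨
      (v = m + k ∧ j + 1 = m) := by
  intro v i j hv h0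
  revert hv h0
  simp only [UA]
  split_ifs <;> intro hv h0 <;> subst hv <;>
    first
      | exact absurd rfl h0
      | exact Or.inl (by omega)
      | exact Or.inr (Or.inl (by omega))
      | exact Or.inr (Or.inr (Or.inl (by omega)))
      | exact Or.inr (Or.inr (Or.inr (Or.inl (by omega))))
      | exact Or.inr (Or.inr (Or.inr (Or.inr (Or.inl (by omega)))))
      | exact Or.inr (Or.inr (Or.inr (Or.inr (Or.inr (Or.inl (by omega))))))
      | exact Or.inr (Or.inr (Or.inr (Or.inr (Or.inr (Or.inr (Or.inl (by omega)))))))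
      | exact Or.inr (Or.inr (Or.inr (Or.inr (Or.inr (Or.inr (Or.inr ((by omega))))))))

set_option maxHeartbeats 1000000 in
theorem UD_colval (m k : ℕ) (hm : 4 ≤ m) (hk : m + 2 ≤ k) :
    ∀ v i j : ℕ, UD m k (i, j) = v → v ≠ 0 →
      (1 ≤ v ∧ v + 2 ≤ m ∧ j + 1 = v) ∨
      (m ≤ v + 1 ∧ v + 5 ≤ 2 * m ∧ v = j + m - 1) ∨
      (2 * m ≤ v + 4 ∧ v + 5 ≤ m + k ∧ v = j + m - 2) ∨
      (v + 4 = m + k ∧ j + 3 = m) ∨ (v + 3 = m + k ∧ j + 2 = m) ∨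
      (v + 2 = m + k ∧ j + 2 = k) ∨ (v + 1 = m + k ∧ j + 1 = m) ∨
      (v = m + k ∧ j + 1 = k) := by
  intro v i j hv h0
  revert hv h0
  simp only [UD]
  split_ifs <;> intro hv h0 <;> subst hv <;>
    first
      | exact absurd rfl h0
      | exact Or.inl (by omega)
      | exact Or.inr (Or.inl (by omega))
      | exact Or.inr (Or.inr (Or.inl (by omega)))
      | exact Or.inr (Or.inr (Or.inr (Or.inl (by omega))))
      | exact Or.inr (Or.inr (Or.inr (Or.inr (Or.inl (by omega)))))
      | exact Or.inr (Or.inr (Or.inr (Or.inr (Or.inr (Or.inl (by omega))))))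
      | exact Or.inr (Or.inr (Or.inr (Or.inr (Or.inr (Or.inr (Or.inl (by omega)))))))
      | exact Or.inr (Or.inr (Or.inr (Or.inr (Or.inr (Or.inr (Or.inr ((by omega))))))))

set_option maxHeartbeats 1000000 in
theorem UC_colval (m : ℕ) (hm : 5 ≤ m) :
    ∀ v i j : ℕ, UC m (i, j) = v → v ≠ 0 →
      (1 ≤ v ∧ v + 2 ≤ m ∧ j + 1 = v) ∨
      (m ≤ v + 1 ∧ v + 6 ≤ 2 * m ∧ v = j + m - 1) ∨
      (2 * m ≤ v + 5 ∧ v + 4 ≤ 2 * m ∧ v = j + m - 3) ∨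
      (v + 3 = 2 * m ∧ j + 4 = m) ∨ (v + 2 = 2 * m ∧ j + 3 = m) ∨
      (v + 1 = 2 * m ∧ j = m) ∨ (v = 2 * m ∧ j + 2 = m) ∨
      (v = 2 * m + 1 ∧ j + 1 = m) := by
  intro v i j hv h0
  revert hv h0
  simp only [UC]
  split_ifs <;> intro hv h0 <;> subst hv <;>
    first
      | exact absurd rfl h0
      | exact Or.inl (by omega)
      | exact Or.inr (Or.inl (by omega))
      | exact Or.inr (Or.inr (Or.inl (by omega)))
      | exact Or.inr (Or.inr (Or.inr (Or.inl (by omega))))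
      | exact Or.inr (Or.inr (Or.inr (Or.inr (Or.inl (by omega)))))
      | exact Or.inr (Or.inr (Or.inr (Or.inr (Or.inr (Or.inl (by omega))))))
      | exact Or.inr (Or.inr (Or.inr (Or.inr (Or.inr (Or.inr (Or.inl (by omega)))))))
      | exact Or.inr (Or.inr (Or.inr (Or.inr (Or.inr (Or.inr (Or.inr ((by omega))))))))

theorem UA_range (m k : ℕ) (hm : 4 ≤ m) (hk : m + 1 ≤ k) :
    ∀ p : ℕ × ℕ, UA m k p ≠ 0 → UA m k p ≤ m + k := by
  rintro ⟨i, j⟩ h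
  revert h
  simp only [UA]
  split_ifs <;> omega

theorem UD_range (m k : ℕ) (hm : 4 ≤ m) (hk : m + 2 ≤ k) :
    ∀ p : ℕ × ℕ, UD m k p ≠ 0 → UD m k p ≤ m + k := by
  rintro ⟨i, j⟩ h
  revert h
  simp only [UD]
  split_ifs <;> omega

theorem UC_range (m : ℕ) (hm : 5 ≤ m) :
    ∀ p : ℕ × ℕ, UC m p ≠ 0 → UC m p ≤ m + (m + 1) := by
  rintro ⟨i, j⟩ h
  revert h
  simp only [UC]
  split_ifs <;> omega

set_option maxHeartbeats 1000000 in
theorem UA_desc (m k : ℕ) (hm : 4 ≤ m) (hk : m + 1 ≤ k) :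
    ∀ p q : ℕ × ℕ, UA m k p = UA m k q + 1 → UA m k q ≠ 0 → p.2 ≤ q.2 →
      UA m k q = m - 2 ∨ UA m k q = m + k - 5 ∨ UA m k q = m + k - 2 := by
  rintro ⟨a, b⟩ ⟨c, d⟩ h1 h2 h3
  have h3' : b ≤ d := h3
  have e1 := UA_colval m k hm hk (UA m k (c, d) + 1) a b h1 (by omega)
  have e2 := UA_colval m k hm hk (UA m k (c, d)) c d rfl h2
  generalize hgen : UA m k (c, d) = v at e1 e2 h2 ⊢
  rcases e1 with h|h|h|h|h|h|h|h <;> rcases e2 with g|g|g|g|g|g|g|g <;> omega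

set_option maxHeartbeats 1000000 in
theorem UD_desc (m k : ℕ) (hm : 4 ≤ m) (hk : m + 2 ≤ k) :
    ∀ p q : ℕ × ℕ, UD m k p = UD m k q + 1 → UD m k q ≠ 0 → p.2 ≤ q.2 →
      UD m k q = m - 2 ∨ UD m k q = m + k - 5 ∨ UD m k q = m + k - 2 := by
  rintro ⟨a, b⟩ ⟨c, d⟩ h1 h2 h3
  have h3' : b ≤ d := h3
  have e1 := UD_colval m k hm hk (UD m k (c, d) + 1) a b h1 (by omega)
  have e2 := UD_colval m k hm hk (UD m k (c, d)) c d rfl h2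
  generalize hgen : UD m k (c, d) = v at e1 e2 h2 ⊢
  rcases e1 with h|h|h|h|h|h|h|h <;> rcases e2 with g|g|g|g|g|g|g|g <;> omega

set_option maxHeartbeats 1000000 in
theorem UC_desc (m : ℕ) (hm : 5 ≤ m) :
    ∀ p q : ℕ × ℕ, UC m p = UC m q + 1 → UC m q ≠ 0 → p.2 ≤ q.2 →
      UC m q = m - 2 ∨ UC m q = m + (m + 1) - 5 ∨ UC m q = m + (m + 1) - 2 := by
  rintro ⟨a, b⟩ ⟨c, d⟩ h1 h2 h3
  have h3' : b ≤ d := h3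
  have e1 := UC_colval m hm (UC m (c, d) + 1) a b h1 (by omega)
  have e2 := UC_colval m hm (UC m (c, d)) c d rfl h2
  generalize hgen : UC m (c, d) = v at e1 e2 h2 ⊢
  rcases e1 with h|h|h|h|h|h|h|h <;> rcases e2 with g|g|g|g|g|g|g|g <;> omega

/-- From the structural facts about a filling `U`, compute the descent set of
the associated tableau. -/
theorem desc_eq (m k : ℕ) (hm : 4 ≤ m) (hk : m + 1 ≤ k) (U : (ℕ × ℕ) → ℕ)
    (hrange : ∀ p, U p ≠ 0 → U p ≤ m + k)
    (hdesc : ∀ p q, U p = U q + 1 → U q ≠ 0 → p.2 ≤ q.2 →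
       U q = m - 2 ∨ U q = m + k - 5 ∨ U q = m + k - 2)
    (hw1 : ∃ p q : ℕ × ℕ, U p = m + k - 1 ∧ U q = m + k - 2 ∧ p.2 ≤ q.2)
    (hw2 : ∃ p q : ℕ × ℕ, U p = m + k - 4 ∧ U q = m + k - 5 ∧ p.2 ≤ q.2)
    (hw3 : ∃ p q : ℕ × ℕ, U p = m - 1 ∧ U q = m - 2 ∧ p.2 ≤ q.2) :
    desC (fun c => if U c = 0 then 0 else m + k + 1 - U c) = {2, 5, k + 2} := by
  ext i
  simp only [desC, Set.mem_setOf_eq, Set.mem_insert_iff, Set.mem_singleton_iff]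
  constructor
  · rintro ⟨hi, p, q, hp, hq, hpq⟩
    have hUp : U p ≠ 0 := by
      intro h0; rw [if_pos h0] at hp; omega
    have hUq : U q ≠ 0 := by
      intro h0; rw [if_pos h0] at hq; omega
    rw [if_neg hUp] at hp
    rw [if_neg hUq] at hq
    have h1 := hrange p hUp
    have h2 := hrange q hUq
    have hsucc : U p = U q + 1 := by omega
    rcases hdesc p q hsucc hUq hpq with h | h | h <;> omega
  · rintro (rfl | rfl | rfl)
    · obtain ⟨p, q, hp, hq, hpq⟩ := hw1
      refine ⟨by omega, p, q, ?_, ?_, hpq⟩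
      · rw [hp]; split_ifs <;> omega
      · rw [hq]; split_ifs <;> omega
    · obtain ⟨p, q, hp, hq, hpq⟩ := hw2
      refine ⟨by omega, p, q, ?_, ?_, hpq⟩
      · rw [hp]; split_ifs <;> omega
      · rw [hq]; split_ifs <;> omega
    · obtain ⟨p, q, hp, hq, hpq⟩ := hw3
      refine ⟨by omega, p, q, ?_, ?_, hpq⟩
      · rw [hp]; split_ifs <;> omega
      · rw [hq]; split_ifs <;> omega

/-- Packaging: two structurally analyzed fillings of `[m, k]` that differ
somewhere give the full conclusion. -/
theorem build (m k : ℕ) (hm : 4 ≤ m) (hk : m + 1 ≤ k) (U V : (ℕ × ℕ) → ℕ)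
    (hU : SCTChain [m, k] U) (hV : SCTChain [m, k] V)
    (hrU : ∀ p, U p ≠ 0 → U p ≤ m + k) (hrV : ∀ p, V p ≠ 0 → V p ≤ m + k)
    (hdU : ∀ p q, U p = U q + 1 → U q ≠ 0 → p.2 ≤ q.2 →
       U q = m - 2 ∨ U q = m + k - 5 ∨ U q = m + k - 2)
    (hdV : ∀ p q, V p = V q + 1 → V q ≠ 0 → p.2 ≤ q.2 →
       V q = m - 2 ∨ V q = m + k - 5 ∨ V q = m + k - 2)
    (hwU1 : ∃ p q : ℕ × ℕ, U p = m + k - 1 ∧ U q = m + k - 2 ∧ p.2 ≤ q.2)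
    (hwU2 : ∃ p q : ℕ × ℕ, U p = m + k - 4 ∧ U q = m + k - 5 ∧ p.2 ≤ q.2)
    (hwU3 : ∃ p q : ℕ × ℕ, U p = m - 1 ∧ U q = m - 2 ∧ p.2 ≤ q.2)
    (hwV1 : ∃ p q : ℕ × ℕ, V p = m + k - 1 ∧ V q = m + k - 2 ∧ p.2 ≤ q.2)
    (hwV2 : ∃ p q : ℕ × ℕ, V p = m + k - 4 ∧ V q = m + k - 5 ∧ p.2 ≤ q.2)
    (hwV3 : ∃ p q : ℕ × ℕ, V p = m - 1 ∧ V q = m - 2 ∧ p.2 ≤ q.2)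
    (hne : ∃ c, U c ≠ 0 ∧ V c ≠ 0 ∧ U c ≠ V c) :
    (∃ T T', IsSCT [m, k] T ∧ IsSCT [m, k] T' ∧ T ≠ T' ∧
      desC T = {2, 5, k + 2} ∧ desC T' = {2, 5, k + 2}) ∧
    ¬ FmfSCT [m, k] := by
  have hsum : [m, k].sum = m + k := by simp
  set T : (ℕ × ℕ) → ℕ := fun c => if U c = 0 then 0 else m + k + 1 - U c with hTdef
  set T' : (ℕ × ℕ) → ℕ := fun c => if V c = 0 then 0 else m + k + 1 - V c with hT'def
  have hsctT : IsSCT [m, k] T := ⟨U, hU, by rw [hsum]⟩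
  have hsctT' : IsSCT [m, k] T' := ⟨V, hV, by rw [hsum]⟩
  have hTne : T ≠ T' := by
    obtain ⟨c, hc1, hc2, hc3⟩ := hne
    intro h
    have h2 := congrFun h c
    rw [hTdef, hT'def] at h2
    simp only [if_neg hc1, if_neg hc2] at h2
    have := hrU c hc1
    have := hrV c hc2
    omega
  have hd1 : desC T = {2, 5, k + 2} := desc_eq m k hm hk U hrU hdU hwU1 hwU2 hwU3
  have hd2 : desC T' = {2, 5, k + 2} := desc_eq m k hm hk V hrV hdV hwV1 hwV2 hwV3
  refine ⟨⟨T, T', hsctT, hsctT', hTne, hd1, hd2⟩, ?_⟩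
  intro hF
  exact hTne (hF T T' hsctT hsctT' (hd1.trans hd2.symm))

set_option maxHeartbeats 4000000 in
/-- For `n ≥ 10` and `n-m > m ≥ 4` there are two distinct standard
composition tableaux of shape `(m, n-m)` both having descent set
`{2, 5, n-m+2}`; hence `S_{(m,n-m)}` is not F-multiplicity free. -/
theorem qs_m_nm_multiplicity (n m : ℕ) (hn : 10 ≤ n) (hm : 4 ≤ m)
    (hmn : m < n - m) :
    (∃ T T', IsSCT [m, n - m] T ∧ IsSCT [m, n - m] T' ∧ T ≠ T' ∧
      desC T = {2, 5, n - m + 2} ∧ desC T' = {2, 5, n - m + 2}) ∧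
    ¬ FmfSCT [m, n - m] := by
  obtain ⟨k, hkdef⟩ : ∃ k, k = n - m := ⟨n - m, rfl⟩
  rw [← hkdef]
  have hk1 : m + 1 ≤ k := by omega
  by_cases hc : k = m + 1
  · subst hc
    have hm5 : 5 ≤ m := by omega
    refine build m (m + 1) hm (by omega) (UA m (m + 1)) (UC m)
      (chainA m (m + 1) hm (by omega)) (chainC m hm5)
      (UA_range m (m + 1) hm (by omega)) (UC_range m hm5)
      (UA_desc m (m + 1) hm (by omega)) (UC_desc m hm5)
      ⟨(0, m - 2), (1, m),
        by simp only [UA]; split_ifs <;> first | omega | exact ((by assumption : False)).elim,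
        by simp only [UA]; split_ifs <;> first | omega | exact ((by assumption : False)).elim, show m - 2 ≤ m by omega⟩
      ⟨(0, m - 3), (1, m - 2),
        by simp only [UA]; split_ifs <;> first | omega | exact ((by assumption : False)).elim,
        by simp only [UA]; split_ifs <;> first | omega | exact ((by assumption : False)).elim, show m - 3 ≤ m - 2 by omega⟩
      ⟨(0, 0), (1, m - 3),
        by simp only [UA]; split_ifs <;> first | omega | exact ((by assumption : False)).elim,
        by simp only [UA]; split_ifs <;> first | omega | exact ((by assumption : False)).elim, show 0 ≤ m - 3 by omega⟩
      ⟨(0, m - 2), (1, m),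
        by simp only [UC]; split_ifs <;> first | omega | exact ((by assumption : False)).elim,
        by simp only [UC]; split_ifs <;> first | omega | exact ((by assumption : False)).elim, show m - 2 ≤ m by omega⟩
      ⟨(0, m - 4), (1, m - 1),
        by simp only [UC]; split_ifs <;> first | omega | exact ((by assumption : False)).elim,
        by simp only [UC]; split_ifs <;> first | omega | exact ((by assumption : False)).elim, show m - 4 ≤ m - 1 by omega⟩
      ⟨(0, 0), (1, m - 3),
        by simp only [UC]; split_ifs <;> first | omega | exact ((by assumption : False)).elim,
        by simp only [UC]; split_ifs <;> first | omega | exact ((by assumption : False)).elim, show 0 ≤ m - 3 by omega⟩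
      ⟨(1, m - 1), ?_, ?_, ?_⟩
    · have : UA m (m + 1) (1, m - 1) = m + (m + 1) - 3 := by
        simp only [UA]; split_ifs <;> first | omega | exact ((by assumption : False)).elim
      omega
    · have : UC m (1, m - 1) = 2 * m - 4 := by
        simp only [UC]; split_ifs <;> first | omega | exact ((by assumption : False)).elim
      omega
    · have h1 : UA m (m + 1) (1, m - 1) = m + (m + 1) - 3 := by
        simp only [UA]; split_ifs <;> first | omega | exact ((by assumption : False)).elim
      have h2 : UC m (1, m - 1) = 2 * m - 4 := by
        simp only [UC]; split_ifs <;> first | omega | exact ((by assumption : False)).elim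
      omega
  · have hk2 : m + 2 ≤ k := by omega
    refine build m k hm hk1 (UA m k) (UD m k)
      (chainA m k hm hk1) (chainD m k hm hk2)
      (UA_range m k hm hk1) (UD_range m k hm hk2)
      (UA_desc m k hm hk1) (UD_desc m k hm hk2)
      ⟨(0, m - 2), (1, k - 1),
        by simp only [UA]; split_ifs <;> first | omega | exact ((by assumption : False)).elim,
        by simp only [UA]; split_ifs <;> first | omega | exact ((by assumption : False)).elim, show m - 2 ≤ k - 1 by omega⟩
      ⟨(0, m - 3), (1, k - 3),
        by simp only [UA]; split_ifs <;> first | omega | exact ((by assumption : False)).elim,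
        by simp only [UA]; split_ifs <;> first | omega | exact ((by assumption : False)).elim, show m - 3 ≤ k - 3 by omega⟩
      ⟨(0, 0), (1, m - 3),
        by simp only [UA]; split_ifs <;> first | omega | exact ((by assumption : False)).elim,
        by simp only [UA]; split_ifs <;> first | omega | exact ((by assumption : False)).elim, show 0 ≤ m - 3 by omega⟩
      ⟨(0, m - 1), (1, k - 2),
        by simp only [UD]; split_ifs <;> first | omega | exact ((by assumption : False)).elim,
        by simp only [UD]; split_ifs <;> first | omega | exact ((by assumption : False)).elim, show m - 1 ≤ k - 2 by omega⟩
      ⟨(0, m - 3), (1, k - 3),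
        by simp only [UD]; split_ifs <;> first | omega | exact ((by assumption : False)).elim,
        by simp only [UD]; split_ifs <;> first | omega | exact ((by assumption : False)).elim, show m - 3 ≤ k - 3 by omega⟩
      ⟨(0, 0), (1, m - 3),
        by simp only [UD]; split_ifs <;> first | omega | exact ((by assumption : False)).elim,
        by simp only [UD]; split_ifs <;> first | omega | exact ((by assumption : False)).elim, show 0 ≤ m - 3 by omega⟩
      ⟨(1, k - 1), ?_, ?_, ?_⟩
    · have : UA m k (1, k - 1) = m + k - 2 := by
        simp only [UA]; split_ifs <;> first | omega | exact ((by assumption : False)).elim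
      omega
    · have : UD m k (1, k - 1) = m + k := by
        simp only [UD]; split_ifs <;> first | omega | exact ((by assumption : False)).elim
      omega
    · have h1 : UA m k (1, k - 1) = m + k - 2 := by
        simp only [UA]; split_ifs <;> first | omega | exact ((by assumption : False)).elim
      have h2 : UD m k (1, k - 1) = m + k := by
        simp only [UD]; split_ifs <;> first | omega | exact ((by assumption : False)).elim
      omega
end
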